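/- arXiv:1604.07089 — 6 statements merged into one kernel-verified Lean document; each statement's English description precedes it below -/
import Mathlib

section
/- Let p be a prime and j ≥ 0 an integer. There is at most one polynomial P_j with rational coefficients in the variables X_w indexed by w ∈ W such that θ_p(j,n) = θ_p(0,n) · P_j((|n|_w)_{w ∈ W}) holds for all nonnegative integers n. That is, if two such polynomials both satisfy this identity for all n ≥ 0, then they are equal. -/
open Finset

/-- `theta p j n` is the number of `t ∈ {0,…,n}` with `ν_p (binom n t) = j`. -/
def theta (p j n : ℕ) : ℕ :=
  ((Finset.range (n + 1)).filter fun t => padicValNat p (n.choose t) = j).card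

/-- the base-`p` digit of `n` at position `i`. -/
def digit (p n i : ℕ) : ℕ := n / p ^ i % p

/-- Words over `{0,…,p−1}` are represented as lists, least significant (rightmost) letter
first; `wordCount p w n` is the number of occurrences of `w` as a factor of the base-`p`
expansion of `n` (padded with leading zeros). -/
noncomputable def wordCount (p : ℕ) (w : List ℕ) (n : ℕ) : ℕ :=
  Set.ncard {i : ℕ | ∀ k < w.length, digit p n (i + k) = w.getD k 0}

/-- membership in the set `W` of admissible words: length ≥ 2, letters `< p`,
leftmost letter (last entry of the list) nonzero, rightmost letter (head) ≠ p−1. -/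
def Adm (p : ℕ) (w : List ℕ) : Prop :=
  2 ≤ w.length ∧ (∀ a ∈ w, a < p) ∧ w.getD (w.length - 1) 0 ≠ 0 ∧ w.getD 0 0 ≠ p - 1

/-- membership in `W_j`. -/
def AdmJ (p j : ℕ) (w : List ℕ) : Prop := Adm p w ∧ w.length ≤ j + 1

/-- membership in `W̃`: nonempty words with letters `< p` and nonzero leftmost letter. -/
def Wt (p : ℕ) (w : List ℕ) : Prop :=
  w ≠ [] ∧ (∀ a ∈ w, a < p) ∧ w.getD (w.length - 1) 0 ≠ 0

/-- The polynomial `T_n(x) = Σ_{t=0}^n x^{ν_p(binom n t)}`. -/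
noncomputable def Tpoly (p n : ℕ) : Polynomial ℤ :=
  ∑ t ∈ Finset.range (n + 1), Polynomial.X ^ padicValNat p (n.choose t)

/-- right truncation: remove the rightmost letter. -/
def rightT (w : List ℕ) : List ℕ := w.tail

/-- left truncation: remove the leftmost letter together with the zeros following it. -/
def leftT (w : List ℕ) : List ℕ := ((w.dropLast).reverse.dropWhile (· = 0)).reverse

/-- the common value `w_{LR} = (w_L)_R = (w_R)_L`. -/
def lrT (w : List ℕ) : List ℕ := leftT w.tail

/-- `T̄_v = T_{(v)_p}/θ_p(0,(v)_p)` as a rational function over `ℚ`. -/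
noncomputable def TbarR (p : ℕ) (v : List ℕ) : RatFunc ℚ :=
  algebraMap (Polynomial ℚ) (RatFunc ℚ) ((Tpoly p (Nat.ofDigits p v)).map (Int.castRingHom ℚ)) /
    (theta p 0 (Nat.ofDigits p v) : RatFunc ℚ)

/-- the rational function `r_w`. -/
noncomputable def rFun (p : ℕ) (w : List ℕ) : RatFunc ℚ :=
  TbarR p w * TbarR p (lrT w) / (TbarR p (rightT w) * TbarR p (leftT w))

/-- `T̄_v` as a power series over `ℚ`. -/
noncomputable def TbarS (p : ℕ) (v : List ℕ) : PowerSeries ℚ :=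
  (((Tpoly p (Nat.ofDigits p v)).map (Int.castRingHom ℚ) : Polynomial ℚ) : PowerSeries ℚ) *
    (PowerSeries.C (theta p 0 (Nat.ofDigits p v) : ℚ))⁻¹

/-- the power series expansion of `r_w` at `0`. -/
noncomputable def rSer (p : ℕ) (w : List ℕ) : PowerSeries ℚ :=
  TbarS p w * TbarS p (lrT w) * (TbarS p (rightT w) * TbarS p (leftT w))⁻¹

/-- `T̄_v` as a polynomial over `ℚ`. -/
noncomputable def TbarP (p : ℕ) (v : List ℕ) : Polynomial ℚ :=
  ((theta p 0 (Nat.ofDigits p v) : ℚ))⁻¹ • ((Tpoly p (Nat.ofDigits p v)).map (Int.castRingHom ℚ))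

/-- formal logarithm of a power series with constant term 1. -/
noncomputable def logPS {K : Type*} [Field K] (f : PowerSeries K) : PowerSeries K :=
  PowerSeries.mk fun n => ∑ k ∈ Finset.range (n + 1),
    ((-1 : K) ^ (k + 1) / k) * PowerSeries.coeff n ((f - 1) ^ k)

/-- formal exponential of a power series with constant term 0. -/
noncomputable def expPS {K : Type*} [Field K] (f : PowerSeries K) : PowerSeries K :=
  PowerSeries.mk fun n => ∑ k ∈ Finset.range (n + 1),
    ((k.factorial : K))⁻¹ * PowerSeries.coeff n (f ^ k)

/-- integer powers of a power series over a field. -/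
noncomputable def fpow {K : Type*} [Field K] (f : PowerSeries K) (z : ℤ) : PowerSeries K :=
  if 0 ≤ z then f ^ z.toNat else f⁻¹ ^ (-z).toNat

/-- sum of base-`p` digits. -/
def digitSum (p n : ℕ) : ℕ := (Nat.digits p n).sum

namespace Stmt1Aux

open scoped Classical in
/-- whether word `v` occurs in the list `D` (read with default 0) at position `i`. -/
noncomputable def MatchAt (v D : List ℕ) (i : ℕ) : Prop :=
  ∀ k < v.length, D.getD (i + k) 0 = v.getD k 0

open scoped Classical in
/-- number of occurrences of `v` in `D`. -/
noncomputable def countIn (v D : List ℕ) : ℕ :=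
  ((Finset.range D.length).filter (fun i => MatchAt v D i)).card

theorem digit_ofDigits (p : ℕ) (hp : 1 < p) :
    ∀ (l : List ℕ), (∀ a ∈ l, a < p) → ∀ i, digit p (Nat.ofDigits p l) i = l.getD i 0 := by
  intro l
  induction l with
  | nil => intro _ i; simp [digit, Nat.ofDigits]
  | cons a l ih =>
    intro h i
    have ha : a < p := h a (by simp)
    cases i with
    | zero =>
      simp only [digit, pow_zero, Nat.div_one, Nat.ofDigits_cons, List.getD_cons_zero]
      rw [Nat.add_mul_mod_self_left]
      exact Nat.mod_eq_of_lt ha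
    | succ i =>
      have hdiv : (Nat.ofDigits p (a :: l) : ℕ) / p = Nat.ofDigits p l := by
        rw [Nat.ofDigits_cons]
        push_cast
        rw [Nat.add_mul_div_left _ _ (by omega : 0 < p), Nat.div_eq_of_lt ha, zero_add]
      have h2 := ih (fun b hb => h b (List.mem_cons_of_mem _ hb)) i
      simp only [digit] at h2 ⊢
      rw [pow_succ', ← Nat.div_div_eq_div_mul, hdiv, List.getD_cons_succ]
      exact h2

theorem list_ext_getD (l1 l2 : List ℕ) (hlen : l1.length = l2.length)
    (h : ∀ k < l1.length, l1.getD k 0 = l2.getD k 0) : l1 = l2 := by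
  apply List.ext_getElem hlen
  intro k h1 h2
  have := h k h1
  rwa [List.getD_eq_getElem _ _ h1, List.getD_eq_getElem _ _ h2] at this

theorem wordCount_eq_countIn (p : ℕ) (hp : 1 < p) (w D : List ℕ)
    (hD : ∀ a ∈ D, a < p) (hw : 1 ≤ w.length) (htop : w.getD (w.length - 1) 0 ≠ 0) :
    wordCount p w (Nat.ofDigits p D) = countIn w D := by
  classical
  have hdig : ∀ i, digit p (Nat.ofDigits p D) i = D.getD i 0 := digit_ofDigits p hp D hD
  have hset : {i : ℕ | ∀ k < w.length, digit p (Nat.ofDigits p D) (i + k) = w.getD k 0}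
      = ↑((Finset.range D.length).filter (fun i => MatchAt w D i)) := by
    ext i
    rw [Finset.mem_coe, Finset.mem_filter]
    simp only [Set.mem_setOf_eq, Finset.coe_filter, Finset.mem_coe, Finset.mem_range, Set.mem_setOf_eq,
      MatchAt, hdig]
    constructor
    · intro h
      refine ⟨?_, h⟩
      by_contra hi
      push_neg at hi
      have h1 := h (w.length - 1) (by omega)
      rw [List.getD_eq_default _ _ (by omega : D.length ≤ i + (w.length - 1))] at h1
      exact htop h1.symm
    · exact fun h => h.2
  rw [wordCount, hset, Set.ncard_coe_finset, countIn]

theorem matchAt_append_left (v A T : List ℕ)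
    (htop : v.getD (v.length - 1) 0 ≠ 0)
    (hT : ∀ k < v.length, T.getD k 0 = 0) (i : ℕ) (hi : i < A.length) :
    MatchAt v (A ++ T) i ↔ MatchAt v A i := by
  rcases Nat.lt_or_ge 0 v.length with hv | hv
  · by_cases hstr : i + v.length ≤ A.length
    · unfold MatchAt
      apply forall₂_congr
      intro k hk
      rw [List.getD_append _ _ _ _ (by omega)]
    · -- straddling: both sides false
      constructor
      · intro hm
        exfalso
        have h1 := hm (v.length - 1) (by omega)
        rw [List.getD_append_right _ _ _ _ (by omega)] at h1
        rw [hT (i + (v.length - 1) - A.length) (by omega)] at h1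
        exact htop h1.symm
      · intro hm
        exfalso
        have h1 := hm (v.length - 1) (by omega)
        rw [List.getD_eq_default _ _ (by omega : A.length ≤ i + (v.length - 1))] at h1
        exact htop h1.symm
  · unfold MatchAt
    constructor <;> intro _ k hk <;> omega

theorem matchAt_append_shift (v A T : List ℕ) (i : ℕ) :
    MatchAt v (A ++ T) (A.length + i) ↔ MatchAt v T i := by
  unfold MatchAt
  apply forall₂_congr
  intro k hk
  rw [List.getD_append_right _ _ _ _ (by omega), show A.length + i + k - A.length = i + k by omega]

theorem countIn_append (v A T : List ℕ)
    (htop : v.getD (v.length - 1) 0 ≠ 0)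
    (hT : ∀ k < v.length, T.getD k 0 = 0) :
    countIn v (A ++ T) = countIn v A + countIn v T := by
  classical
  unfold countIn
  rw [List.length_append, Finset.range_add, Finset.filter_union]
  rw [Finset.card_union_of_disjoint, Finset.filter_map, Finset.card_map]
  · congr 1
    · congr 1
      apply Finset.filter_congr
      intro i hi
      rw [Finset.mem_range] at hi
      exact matchAt_append_left v A T htop hT i hi
    · congr 1
      apply Finset.filter_congr
      intro i _
      simp only [Function.comp, addLeftEmbedding_apply]
      exact matchAt_append_shift v A T i
  · rw [Finset.disjoint_left]
    intro i hi1 hi2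
    simp only [Finset.mem_filter, Finset.mem_map, Finset.mem_range,
      addLeftEmbedding_apply] at hi1 hi2
    obtain ⟨⟨j, hj, rfl⟩, -⟩ := hi2
    omega

/-- the block of a column word `g`: `L` zeros, `g`, `L` zeros (lsb first). -/
def blockOf (L : ℕ) (g : List ℕ) : List ℕ :=
  List.replicate L 0 ++ g ++ List.replicate L 0

theorem getD_replicate' (n k : ℕ) (a : ℕ) (hk : k < n) :
    (List.replicate n a).getD k 0 = a := by
  rw [List.getD_eq_getElem _ _ (by simpa using hk), List.getElem_replicate]

theorem getD_join_blocks (L : ℕ) (bs : List (List ℕ)) (k : ℕ) (hk : k < L) :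
    ((bs.map (blockOf L)).flatten).getD k 0 = 0 := by
  cases bs with
  | nil => simp
  | cons g bs =>
    rw [List.map_cons, List.flatten_cons]
    rw [List.getD_append _ _ _ _ (by simp [blockOf]; omega)]
    unfold blockOf
    rw [List.append_assoc, List.getD_append _ _ _ _ (by simp; omega)]
    exact getD_replicate' L k 0 hk

theorem countIn_join (v : List ℕ) (L : ℕ) (hvL : v.length ≤ L)
    (htop : v.getD (v.length - 1) 0 ≠ 0) (bs : List (List ℕ)) :
    countIn v ((bs.map (blockOf L)).flatten) = (bs.map (fun g => countIn v (blockOf L g))).sum := by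
  induction bs with
  | nil => simp [countIn]
  | cons g bs ih =>
    rw [List.map_cons, List.flatten_cons, countIn_append v _ _ htop
      (fun k hk => getD_join_blocks L bs k (by omega)), ih]
    simp

/-- number of least-significant zeros of the word. -/
def zf (v : List ℕ) : ℕ := (v.takeWhile (fun a => a == 0)).length

/-- the word with its least-significant zeros removed. -/
def coreOf (v : List ℕ) : List ℕ := v.dropWhile (fun a => a == 0)

theorem zf_split (v : List ℕ) : List.replicate (zf v) 0 ++ coreOf v = v := by
  rw [zf, coreOf]
  have h : v.takeWhile (fun a => a == 0)
      = List.replicate (v.takeWhile (fun a => a == 0)).length 0 := by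
    apply List.eq_replicate_of_mem
    intro b hb
    simpa using List.mem_takeWhile_imp hb
  conv_rhs => rw [← List.takeWhile_append_dropWhile (p := fun a => a == 0) (l := v)]
  rw [← h]

theorem zf_add_len (v : List ℕ) : zf v + (coreOf v).length = v.length := by
  conv_rhs => rw [← zf_split v]
  simp

theorem zf_le_len (v : List ℕ) : zf v ≤ v.length := by
  have := zf_add_len v; omega

theorem getD_lt_zf (v : List ℕ) (k : ℕ) (hk : k < zf v) : v.getD k 0 = 0 := by
  conv_lhs => rw [← zf_split v]
  rw [List.getD_append _ _ _ _ (by simpa using hk)]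
  exact getD_replicate' _ _ _ hk

theorem getD_zf_add (v : List ℕ) (t : ℕ) : v.getD (zf v + t) 0 = (coreOf v).getD t 0 := by
  have h := zf_split v
  calc v.getD (zf v + t) 0
      = (List.replicate (zf v) 0 ++ coreOf v).getD (zf v + t) 0 := by rw [h]
    _ = (coreOf v).getD t 0 := by
        rw [List.getD_append_right _ _ _ _ (by simp)]
        simp

theorem core_getD_zero_ne : ∀ v : List ℕ, coreOf v ≠ [] → (coreOf v).getD 0 0 ≠ 0 := by
  intro v
  induction v with
  | nil => simp [coreOf]
  | cons a t ih =>
    by_cases ha : a = 0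
    · subst ha
      intro h
      have hc : coreOf (0 :: t) = coreOf t := by simp [coreOf]
      rw [hc] at h ⊢
      exact ih h
    · intro _
      have hc : coreOf (a :: t) = a :: t := by
        simp [coreOf, List.dropWhile_cons]
        intro h'; exact absurd h' ha
      rw [hc]
      simpa using ha

theorem core_ne_nil (v : List ℕ) (hlen : 1 ≤ v.length)
    (htop : v.getD (v.length - 1) 0 ≠ 0) : coreOf v ≠ [] := by
  intro hc
  have hz : zf v + 0 = v.length := by
    have := zf_add_len v; rw [hc] at this; simpa using this
  exact htop (getD_lt_zf v _ (by omega))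

theorem zf_eq (v : List ℕ) (j : ℕ) (hj : j < v.length) (h0 : ∀ k < j, v.getD k 0 = 0)
    (hne : v.getD j 0 ≠ 0) : zf v = j := by
  rcases lt_trichotomy (zf v) j with h | h | h
  · exfalso
    have hcne : coreOf v ≠ [] := by
      intro hc
      have h2 := zf_add_len v; rw [hc] at h2
      simp at h2; omega
    have h3 := core_getD_zero_ne v hcne
    have h2 := getD_zf_add v 0
    rw [Nat.add_zero] at h2
    exact h3 (h2 ▸ h0 (zf v) h)
  · exact h
  · exact absurd (getD_lt_zf v j h) hne

theorem mem_core_mem (v : List ℕ) (a : ℕ) (ha : a ∈ coreOf v) : a ∈ v := by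
  have h := zf_split v
  rw [← h]
  exact List.mem_append_right _ ha

/-- the measure used for the triangular argument. -/
def key (L : ℕ) (v : List ℕ) : ℕ := (coreOf v).length * (L + 1) + zf v

/-- `W`-shaped words: a run of the digit `q` preceded by at least one zero. -/
def WS (q : ℕ) (w : List ℕ) : Prop :=
  coreOf w = List.replicate (coreOf w).length q ∧ 1 ≤ zf w

/-- the special column words. -/
def Cword (q L : ℕ) (v : List ℕ) : List ℕ :=
  List.replicate L q ++ (List.replicate (zf v) 0 ++ coreOf v)

theorem getD_concat_at (X Y : List ℕ) (j : ℕ) :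
    (X ++ Y).getD j 0 = if j < X.length then X.getD j 0 else Y.getD (j - X.length) 0 := by
  split
  · rw [List.getD_append _ _ _ _ (by omega)]
  · rw [List.getD_append_right _ _ _ _ (by omega)]

theorem W0_getD (q L : ℕ) (j : ℕ) :
    (blockOf L (List.replicate L q)).getD j 0 =
      if j < L then 0 else if j < 2*L then q else 0 := by
  unfold blockOf
  rw [List.append_assoc, getD_concat_at]
  simp only [List.length_replicate]
  by_cases h1 : j < L
  · rw [if_pos h1, if_pos h1]
    exact getD_replicate' _ _ _ h1
  · rw [if_neg h1, if_neg h1, getD_concat_at]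
    simp only [List.length_replicate]
    by_cases h2 : j - L < L
    · rw [if_pos h2, if_pos (by omega : j < 2*L)]
      exact getD_replicate' _ _ _ h2
    · rw [if_neg h2, if_neg (by omega : ¬ j < 2*L)]
      rcases Nat.lt_or_ge (j - L - L) L with h3 | h3
      · exact getD_replicate' _ _ _ h3
      · exact List.getD_eq_default _ _ (by simpa using h3)

theorem W1_getD (q L : ℕ) (v : List ℕ) (j : ℕ) :
    (blockOf L (Cword q L v)).getD j 0 =
      if j < L then 0 else if j < 2*L then q
      else if j < 2*L + zf v then 0
      else if j < 2*L + zf v + (coreOf v).length then (coreOf v).getD (j - (2*L + zf v)) 0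
      else 0 := by
  unfold blockOf Cword
  rw [List.append_assoc, getD_concat_at]
  simp only [List.length_replicate]
  by_cases h1 : j < L
  · rw [if_pos h1, if_pos h1]
    exact getD_replicate' _ _ _ h1
  · rw [if_neg h1, if_neg h1, List.append_assoc, getD_concat_at]
    simp only [List.length_replicate]
    by_cases h2 : j - L < L
    · rw [if_pos h2, if_pos (by omega : j < 2*L)]
      exact getD_replicate' _ _ _ h2
    · rw [if_neg h2, if_neg (by omega : ¬ j < 2*L), List.append_assoc, getD_concat_at]
      simp only [List.length_replicate]
      by_cases h3 : j - L - L < zf v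
      · rw [if_pos h3, if_pos (by omega : j < 2*L + zf v)]
        exact getD_replicate' _ _ _ h3
      · rw [if_neg h3, if_neg (by omega : ¬ j < 2*L + zf v), getD_concat_at]
        by_cases h4 : j - L - L - zf v < (coreOf v).length
        · rw [if_pos h4, if_pos (by omega : j < 2*L + zf v + (coreOf v).length)]
          congr 1
          omega
        · rw [if_neg h4, if_neg (by omega : ¬ j < 2*L + zf v + (coreOf v).length)]
          rcases Nat.lt_or_ge (j - L - L - zf v - (coreOf v).length) L with h5 | h5
          · exact getD_replicate' _ _ _ h5
          · exact List.getD_eq_default _ _ (by simp; omega)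

theorem match_W0_iff (p L : ℕ) (hp : 2 ≤ p) (w : List ℕ) (hw : Adm p w) (hwL : w.length ≤ L)
    (i : ℕ) :
    MatchAt w (blockOf L (List.replicate L (p-1))) i ↔ (WS (p-1) w ∧ i = L - zf w) := by
  obtain ⟨hlen, hletters, htop, hbot⟩ := hw
  have hq1 : 1 ≤ p - 1 := by omega
  constructor
  · intro h
    have h1 := h (w.length - 1) (by omega)
    rw [W0_getD] at h1
    split_ifs at h1 with c1 c2
    · exact absurd h1.symm htop
    · -- L ≤ i + (μ-1) < 2L
      have hiL : i < L := by
        by_contra hi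
        push_neg at hi
        have h0 := h 0 (by omega)
        rw [Nat.add_zero, W0_getD, if_neg (by omega), if_pos (by omega)] at h0
        exact hbot h0.symm
      have hz' : zf w = L - i := by
        apply zf_eq w (L - i) (by omega)
        · intro k hk
          have hk' := h k (by omega)
          rw [W0_getD, if_pos (by omega)] at hk'
          exact hk'.symm
        · have hk' := h (L - i) (by omega)
          rw [W0_getD, if_neg (by omega), if_pos (by omega)] at hk'
          rw [← hk']
          omega
      have hmlen : zf w + (coreOf w).length = w.length := zf_add_len w
      have hcore : coreOf w = List.replicate (coreOf w).length (p-1) := by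
        apply list_ext_getD _ _ (by simp)
        intro s hs
        rw [getD_replicate' _ _ _ (by simpa using hs)]
        have h2 : (coreOf w).getD s 0 = w.getD (zf w + s) 0 := (getD_zf_add w s).symm
        rw [h2]
        have hk' := h (zf w + s) (by omega)
        rw [W0_getD, if_neg (by omega), if_pos (by omega)] at hk'
        exact hk'.symm
      exact ⟨⟨hcore, by omega⟩, by omega⟩
    · exact absurd h1.symm htop
  · rintro ⟨⟨hcore, hz1⟩, rfl⟩
    have hmlen : zf w + (coreOf w).length = w.length := zf_add_len w
    have hcne : coreOf w ≠ [] := core_ne_nil w (by omega) htop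
    have hm1 : 1 ≤ (coreOf w).length := by
      cases hc : coreOf w
      · exact absurd hc hcne
      · simp [hc]
    intro k hk
    rw [W0_getD]
    by_cases hkz : k < zf w
    · rw [if_pos (by omega), getD_lt_zf w k hkz]
    · rw [if_neg (by omega), if_pos (by omega)]
      have h2 : w.getD k 0 = (coreOf w).getD (k - zf w) 0 := by
        have h3 := getD_zf_add w (k - zf w)
        rw [show zf w + (k - zf w) = k by omega] at h3
        exact h3
      rw [h2, hcore, getD_replicate' _ _ _ (by omega)]

theorem match_W1_run_iff (p L : ℕ) (hp : 2 ≤ p) (v w : List ℕ) (hw : Adm p w)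
    (hwL : w.length ≤ L) (i : ℕ) :
    (MatchAt w (blockOf L (Cword (p-1) L v)) i ∧ i + (w.length - 1) < 2*L)
      ↔ (WS (p-1) w ∧ i = L - zf w) := by
  obtain ⟨hlen, hletters, htop, hbot⟩ := hw
  have hq1 : 1 ≤ p - 1 := by omega
  constructor
  · rintro ⟨h, ht⟩
    have h1 := h (w.length - 1) (by omega)
    rw [W1_getD] at h1
    split_ifs at h1 with c1 c2
    · exact absurd h1.symm htop
    · have hiL : i < L := by
        by_contra hi
        push_neg at hi
        have h0 := h 0 (by omega)
        rw [Nat.add_zero, W1_getD, if_neg (by omega), if_pos (by omega)] at h0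
        exact hbot h0.symm
      have hz' : zf w = L - i := by
        apply zf_eq w (L - i) (by omega)
        · intro k hk
          have hk' := h k (by omega)
          rw [W1_getD, if_pos (by omega)] at hk'
          exact hk'.symm
        · have hk' := h (L - i) (by omega)
          rw [W1_getD, if_neg (by omega), if_pos (by omega)] at hk'
          rw [← hk']
          omega
      have hmlen : zf w + (coreOf w).length = w.length := zf_add_len w
      have hcore : coreOf w = List.replicate (coreOf w).length (p-1) := by
        apply list_ext_getD _ _ (by simp)
        intro s hs
        rw [getD_replicate' _ _ _ (by simpa using hs)]
        have h2 : (coreOf w).getD s 0 = w.getD (zf w + s) 0 := (getD_zf_add w s).symm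
        rw [h2]
        have hk' := h (zf w + s) (by omega)
        rw [W1_getD, if_neg (by omega), if_pos (by omega)] at hk'
        exact hk'.symm
      exact ⟨⟨hcore, by omega⟩, by omega⟩
    all_goals omega
  · rintro ⟨⟨hcore, hz1⟩, rfl⟩
    have hmlen : zf w + (coreOf w).length = w.length := zf_add_len w
    have hcne : coreOf w ≠ [] := core_ne_nil w (by omega) htop
    have hm1 : 1 ≤ (coreOf w).length := by
      cases hc : coreOf w
      · exact absurd hc hcne
      · simp [hc]
    constructor
    · intro k hk
      rw [W1_getD]
      by_cases hkz : k < zf w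
      · rw [if_pos (by omega), getD_lt_zf w k hkz]
      · rw [if_neg (by omega), if_pos (by omega)]
        have h2 : w.getD k 0 = (coreOf w).getD (k - zf w) 0 := by
          have h3 := getD_zf_add w (k - zf w)
          rw [show zf w + (k - zf w) = k by omega] at h3
          exact h3
        rw [h2, hcore, getD_replicate' _ _ _ (by omega)]
    · omega

theorem W1_core_key (p L : ℕ) (hp : 2 ≤ p) (v w : List ℕ) (hv : Adm p v) (hvL : v.length ≤ L)
    (hw : Adm p w) (hwL : w.length ≤ L) (i : ℕ)
    (h : MatchAt w (blockOf L (Cword (p-1) L v)) i)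
    (ht : ¬ (i + (w.length - 1) < 2*L)) :
    key L w < key L v ∨ w = v := by
  obtain ⟨hlen, hlet, htop, hbot⟩ := hw
  obtain ⟨hlenv, hletv, htopv, hbotv⟩ := hv
  have hmz : zf v + (coreOf v).length = v.length := zf_add_len v
  have hcorev : coreOf v ≠ [] := core_ne_nil v (by omega) htopv
  have hm1 : 1 ≤ (coreOf v).length := by
    cases hc : coreOf v
    · exact absurd hc hcorev
    · simp [hc]
  have hmz' : zf w + (coreOf w).length = w.length := zf_add_len w
  have h1 := h (w.length - 1) (by omega)
  rw [W1_getD] at h1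
  split_ifs at h1 with c1 c2 c3
  · exact absurd h1.symm htop
  · exact absurd h1.symm htop
  · -- top in the core region
    have hi2L : 2*L ≤ i := by
      rcases Nat.lt_or_ge i (2*L) with hlt | hge
      · exfalso
        have hiL : L ≤ i := by omega
        have h0 := h 0 (by omega)
        rw [Nat.add_zero, W1_getD, if_neg (by omega), if_pos hlt] at h0
        exact hbot h0.symm
      · exact hge
    rcases Nat.lt_or_ge i (2*L + zf v) with hsubb | hsuba
    · -- sub-case (b): bottom among the zeros below the core
      have hj1 : 1 ≤ 2*L + zf v - i := by omega
      have hjμ : 2*L + zf v - i < w.length := by omega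
      have hzero : ∀ k < 2*L + zf v - i, w.getD k 0 = 0 := by
        intro k hk
        have hk' := h k (by omega)
        rw [W1_getD, if_neg (by omega), if_neg (by omega), if_pos (by omega)] at hk'
        exact hk'.symm
      have hvals : ∀ k, 2*L + zf v - i ≤ k → k < w.length →
          w.getD k 0 = (coreOf v).getD (k - (2*L + zf v - i)) 0 := by
        intro k hkj hk
        have hk' := h k hk
        rw [W1_getD, if_neg (by omega), if_neg (by omega), if_neg (by omega),
          if_pos (by omega)] at hk'
        rw [← hk']
        congr 1
        omega
      have hz' : zf w = 2*L + zf v - i := by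
        apply zf_eq w _ hjμ hzero
        rw [hvals _ le_rfl hjμ, Nat.sub_self]
        exact core_getD_zero_ne v hcorev
      have hm'm : (coreOf w).length ≤ (coreOf v).length := by omega
      rcases Nat.lt_or_ge (coreOf w).length (coreOf v).length with hlt | hge
      · left
        show (coreOf w).length * (L+1) + zf w < (coreOf v).length * (L+1) + zf v
        have hmul := Nat.mul_le_mul_right (L+1)
          (show (coreOf w).length ≤ (coreOf v).length - 1 by omega)
        have hsub := Nat.sub_one_mul (coreOf v).length (L+1)
        have hge1 : (L+1) ≤ (coreOf v).length * (L+1) :=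
          Nat.le_mul_of_pos_left _ (by omega)
        have hzL : zf w ≤ L := le_trans (zf_le_len w) hwL
        omega
      · have hmm : (coreOf w).length = (coreOf v).length := by omega
        rcases Nat.lt_or_ge (zf w) (zf v) with hjlt | hjge
        · left
          show (coreOf w).length * (L+1) + zf w < (coreOf v).length * (L+1) + zf v
          rw [hmm]
          omega
        · right
          have hjz' : zf w = zf v := by omega
          apply list_ext_getD _ _ (by omega : w.length = v.length)
          intro k hk
          by_cases hkz : k < zf v
          · rw [hzero k (by omega), getD_lt_zf v k (by omega)]
          · rw [hvals k (by omega) hk]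
            have h5 := getD_zf_add v (k - zf v)
            rw [show zf v + (k - zf v) = k by omega] at h5
            rw [show k - (2*L + zf v - i) = k - zf v by omega]
            exact h5.symm
    · -- sub-case (a): the word is a factor of the core
      have hvals : ∀ k < w.length, w.getD k 0 = (coreOf v).getD (i - (2*L + zf v) + k) 0 := by
        intro k hk
        have hk' := h k hk
        rw [W1_getD, if_neg (by omega), if_neg (by omega), if_neg (by omega),
          if_pos (by omega)] at hk'
        rw [← hk']
        congr 1
        omega
      have haμ : (i - (2*L + zf v)) + w.length ≤ (coreOf v).length := by omega
      rcases Nat.lt_or_ge (coreOf w).length (coreOf v).length with hlt | hge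
      · left
        show (coreOf w).length * (L+1) + zf w < (coreOf v).length * (L+1) + zf v
        have hmul := Nat.mul_le_mul_right (L+1)
          (show (coreOf w).length ≤ (coreOf v).length - 1 by omega)
        have hsub := Nat.sub_one_mul (coreOf v).length (L+1)
        have hge1 : (L+1) ≤ (coreOf v).length * (L+1) :=
          Nat.le_mul_of_pos_left _ (by omega)
        have hzL : zf w ≤ L := le_trans (zf_le_len w) hwL
        omega
      · have hμm : w.length ≤ (coreOf v).length := by omega
        have hmm : (coreOf w).length = (coreOf v).length := by omega
        have hz0 : zf w = 0 := by omega
        have ha0 : i - (2*L + zf v) = 0 := by omega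
        have hwcore : w = coreOf v := by
          apply list_ext_getD _ _ (by omega : w.length = (coreOf v).length)
          intro k hk
          have h6 := hvals k hk
          rwa [ha0, Nat.zero_add] at h6
        by_cases hzv : zf v = 0
        · right
          have hvcore : v = coreOf v := by
            have hs := zf_split v
            rw [hzv] at hs
            simpa using hs.symm
          rw [hwcore, ← hvcore]
        · left
          show (coreOf w).length * (L+1) + zf w < (coreOf v).length * (L+1) + zf v
          rw [hmm]
          omega
  · exact absurd h1.symm htop

theorem diag_match (p L : ℕ) (hp : 2 ≤ p) (v : List ℕ) (hv : Adm p v) (hvL : v.length ≤ L) :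
    MatchAt v (blockOf L (Cword (p-1) L v)) (2*L) := by
  obtain ⟨hlenv, hletv, htopv, hbotv⟩ := hv
  have hmz : zf v + (coreOf v).length = v.length := zf_add_len v
  intro k hk
  rw [W1_getD]
  by_cases hkz : k < zf v
  · rw [if_neg (by omega), if_neg (by omega), if_pos (by omega)]
    exact (getD_lt_zf v k hkz).symm
  · rw [if_neg (by omega), if_neg (by omega), if_neg (by omega), if_pos (by omega)]
    have h5 := getD_zf_add v (k - zf v)
    rw [show zf v + (k - zf v) = k by omega] at h5
    rw [show 2*L + k - (2*L + zf v) = k - zf v by omega]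
    exact h5.symm

open scoped Classical in
/-- number of matches of `w` in the column block of `v` whose top lies in the core of `v`. -/
noncomputable def coreTopCard (p L : ℕ) (v w : List ℕ) : ℕ :=
  ((Finset.range (blockOf L (Cword (p-1) L v)).length).filter
    (fun i => MatchAt w (blockOf L (Cword (p-1) L v)) i ∧ ¬ (i + (w.length - 1) < 2*L))).card

theorem countIn_W1_eq (p L : ℕ) (hp : 2 ≤ p) (hL : 1 ≤ L) (v w : List ℕ)
    (hw : Adm p w) (hwL : w.length ≤ L) :
    countIn w (blockOf L (Cword (p-1) L v))
      = countIn w (blockOf L (List.replicate L (p-1))) + coreTopCard p L v w := by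
  classical
  have hzw : zf w ≤ w.length := zf_le_len w
  have hlen1 : (blockOf L (Cword (p-1) L v)).length = 3*L + zf v + (coreOf v).length := by
    simp [blockOf, Cword]; ring
  have hlen0 : (blockOf L (List.replicate L (p-1))).length = 3*L := by
    simp [blockOf]; ring
  have hW0 : (Finset.range (blockOf L (List.replicate L (p-1))).length).filter
      (fun i => MatchAt w (blockOf L (List.replicate L (p-1))) i)
      = (Finset.range (blockOf L (Cword (p-1) L v)).length).filter
        (fun i => MatchAt w (blockOf L (Cword (p-1) L v)) i ∧ i + (w.length - 1) < 2*L) := by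
    ext i
    simp only [Finset.mem_filter, Finset.mem_range]
    constructor
    · rintro ⟨hi, hm⟩
      have h2 := (match_W0_iff p L hp w hw hwL i).1 hm
      have h3 := (match_W1_run_iff p L hp v w hw hwL i).2 h2
      exact ⟨by omega, h3⟩
    · rintro ⟨hi, hm⟩
      have h2 := (match_W1_run_iff p L hp v w hw hwL i).1 hm
      have h3 := (match_W0_iff p L hp w hw hwL i).2 h2
      refine ⟨by omega, h3⟩
  unfold countIn coreTopCard
  rw [hW0]
  rw [← Finset.card_filter_add_card_filter_not
    (s := (Finset.range (blockOf L (Cword (p-1) L v)).length).filter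
      (fun i => MatchAt w (blockOf L (Cword (p-1) L v)) i))
    (p := fun i => i + (w.length - 1) < 2*L)]
  rw [Finset.filter_filter, Finset.filter_filter]

theorem coreTop_diag_pos (p L : ℕ) (hp : 2 ≤ p) (hL : 1 ≤ L) (v : List ℕ)
    (hv : Adm p v) (hvL : v.length ≤ L) : coreTopCard p L v v ≠ 0 := by
  classical
  have hlen1 : (blockOf L (Cword (p-1) L v)).length = 3*L + zf v + (coreOf v).length := by
    simp [blockOf, Cword]; ring
  unfold coreTopCard
  apply Finset.card_ne_zero.mpr
  refine ⟨2*L, ?_⟩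
  simp only [Finset.mem_filter, Finset.mem_range]
  refine ⟨by omega, diag_match p L hp v hv hvL, by have := hv.1; omega⟩

theorem coreTop_ne_zero_key (p L : ℕ) (hp : 2 ≤ p) (v w : List ℕ) (hv : Adm p v)
    (hvL : v.length ≤ L) (hw : Adm p w) (hwL : w.length ≤ L)
    (h : coreTopCard p L v w ≠ 0) : key L w < key L v ∨ w = v := by
  classical
  unfold coreTopCard at h
  obtain ⟨i, hi⟩ := Finset.card_ne_zero.mp h
  simp only [Finset.mem_filter, Finset.mem_range] at hi
  exact W1_core_key p L hp v w hv hvL hw hwL i hi.2.1 hi.2.2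

theorem coreTop_le_countIn (p L : ℕ) (v w : List ℕ) :
    coreTopCard p L v w ≤ countIn w (blockOf L (Cword (p-1) L v)) := by
  classical
  unfold coreTopCard countIn
  apply Finset.card_le_card
  intro i hi
  simp only [Finset.mem_filter] at hi ⊢
  exact ⟨hi.1, hi.2.1⟩

open scoped Classical in
noncomputable def colVec (p L : ℕ) (g : List ℕ) : (List ℕ) → ℚ :=
  fun w => if Adm p w ∧ w.length ≤ L then (countIn w (blockOf L g) : ℚ) else 0

def ColWords (p L : ℕ) : Set (List ℕ) :=
  insert (List.replicate L (p-1)) ((fun v => Cword (p-1) L v) '' {v | Adm p v ∧ v.length ≤ L})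

noncomputable def GoodCols (p L : ℕ) : Set ((List ℕ) → ℚ) := (colVec p L) '' (ColWords p L)

theorem countIn_ne_zero_slice (w D : List ℕ) (h : countIn w D ≠ 0) :
    ∃ i < D.length, w = List.ofFn (fun k : Fin w.length => D.getD (i + (k : ℕ)) 0) := by
  classical
  unfold countIn at h
  obtain ⟨i, hi⟩ := Finset.card_ne_zero.mp h
  simp only [Finset.mem_filter, Finset.mem_range] at hi
  refine ⟨i, hi.1, ?_⟩
  apply list_ext_getD _ _ (by simp)
  intro k hk
  have h1 : (List.ofFn fun k : Fin w.length => D.getD (i + (k:ℕ)) 0).getD k 0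
      = D.getD (i + k) 0 := by
    rw [List.getD_eq_getElem _ _ (by simpa using hk)]
    simp
  rw [h1]
  exact (hi.2 k hk).symm

theorem support_finite (L : ℕ) (D : List ℕ) :
    {w : List ℕ | countIn w D ≠ 0 ∧ w.length ≤ L}.Finite := by
  classical
  apply Set.Finite.subset (Set.Finite.image
    (f := fun pr : ℕ × ℕ => List.ofFn (fun k : Fin pr.2 => D.getD (pr.1 + (k:ℕ)) 0))
    (Set.Finite.prod (Set.finite_Icc 0 D.length) (Set.finite_Icc 0 L)))
  rintro w ⟨hne, hlen⟩
  obtain ⟨i, hi, heq⟩ := countIn_ne_zero_slice w D hne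
  exact ⟨(i, w.length), ⟨by simp; omega, by simp; omega⟩, heq.symm⟩

/-- standard basis vector. -/
noncomputable def sngl (w : List ℕ) : (List ℕ) → ℚ := Pi.single w 1

theorem sngl_apply_same (w : List ℕ) : sngl w w = 1 := by
  simp [sngl]

theorem sngl_apply_ne (w u : List ℕ) (h : u ≠ w) : sngl w u = 0 := by
  classical
  simp [sngl, Pi.single_eq_of_ne h]

theorem pi_eq_sum_single (x : List ℕ → ℚ) (T : Finset (List ℕ))
    (hx : ∀ w, w ∉ T → x w = 0) :
    x = ∑ w ∈ T, x w • sngl w := by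
  classical
  funext u
  rw [Finset.sum_apply]
  by_cases hu : u ∈ T
  · rw [Finset.sum_eq_single u]
    · simp [sngl_apply_same]
    · intro b _ hb
      simp [sngl_apply_ne b u (Ne.symm hb)]
    · intro h; exact absurd hu h
  · rw [hx u hu, Finset.sum_eq_zero]
    intro b hb
    have hbu : u ≠ b := fun e => hu (e ▸ hb)
    simp [sngl_apply_ne b u hbu]

theorem single_mem_span (p L : ℕ) (hp : 2 ≤ p) (hL : 2 ≤ L) :
    ∀ (n : ℕ) (v : List ℕ), key L v = n → Adm p v → v.length ≤ L →
      sngl v ∈ Submodule.span ℚ (GoodCols p L) := by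
  classical
  intro n
  induction n using Nat.strong_induction_on with
  | _ n ih =>
    intro v hkey hv hvL
    have hmem1 : colVec p L (Cword (p-1) L v) ∈ GoodCols p L :=
      Set.mem_image_of_mem _ (Set.mem_insert_of_mem _ ⟨v, ⟨hv, hvL⟩, rfl⟩)
    have hmem0 : colVec p L (List.replicate L (p-1)) ∈ GoodCols p L :=
      Set.mem_image_of_mem _ (Set.mem_insert _ _)
    set Δ : (List ℕ) → ℚ :=
      colVec p L (Cword (p-1) L v) - colVec p L (List.replicate L (p-1)) with hΔdef
    have hΔmem : Δ ∈ Submodule.span ℚ (GoodCols p L) :=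
      sub_mem (Submodule.subset_span hmem1) (Submodule.subset_span hmem0)
    have hΔval : ∀ w, Adm p w → w.length ≤ L → Δ w = (coreTopCard p L v w : ℚ) := by
      intro w hw hwL
      have hpos : Adm p w ∧ w.length ≤ L := ⟨hw, hwL⟩
      simp only [hΔdef, Pi.sub_apply, colVec, if_pos hpos]
      rw [countIn_W1_eq p L hp (by omega) v w hw hwL]
      push_cast
      ring
    have hΔval0 : ∀ w, ¬ (Adm p w ∧ w.length ≤ L) → Δ w = 0 := by
      intro w hw
      simp only [hΔdef, Pi.sub_apply, colVec, if_neg hw, sub_zero]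
    -- finite support
    have hfin : {w : List ℕ | Δ w ≠ 0}.Finite := by
      apply Set.Finite.subset (support_finite L (blockOf L (Cword (p-1) L v)))
      intro w hw
      simp only [Set.mem_setOf_eq] at hw ⊢
      by_cases hadm : Adm p w ∧ w.length ≤ L
      · rw [hΔval w hadm.1 hadm.2] at hw
        refine ⟨?_, hadm.2⟩
        intro hc
        apply hw
        have h2 := coreTop_le_countIn p L v w
        rw [hc] at h2
        simp only [Nat.le_zero] at h2
        rw [h2]; simp
      · exact absurd (hΔval0 w hadm) hw
    set T : Finset (List ℕ) := hfin.toFinset with hTdef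
    have hT : Δ = ∑ w ∈ T, Δ w • sngl w := by
      apply pi_eq_sum_single
      intro w hw
      by_contra hc
      exact hw (by simp [hTdef, Set.Finite.mem_toFinset]; exact hc)
    have hΔv : Δ v ≠ 0 := by
      rw [hΔval v hv hvL]
      exact_mod_cast coreTop_diag_pos p L hp (by omega) v hv hvL
    have hvT : v ∈ T := by
      simp [hTdef, Set.Finite.mem_toFinset]
      exact hΔv
    have hrest : ∑ w ∈ T.erase v, Δ w • sngl w ∈ Submodule.span ℚ (GoodCols p L) := by
      apply Submodule.sum_mem
      intro w hw
      have hwv : w ≠ v := Finset.ne_of_mem_erase hw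
      have hwT : w ∈ T := Finset.mem_of_mem_erase hw
      have hΔw : Δ w ≠ 0 := by
        have := Set.Finite.mem_toFinset hfin |>.1 (hTdef ▸ hwT)
        exact this
      have hadm : Adm p w ∧ w.length ≤ L := by
        by_contra hc
        exact hΔw (hΔval0 w hc)
      have hct : coreTopCard p L v w ≠ 0 := by
        intro hc
        apply hΔw
        rw [hΔval w hadm.1 hadm.2, hc]
        simp
      have hkw : key L w < n := by
        rcases coreTop_ne_zero_key p L hp v w hv hvL hadm.1 hadm.2 hct with hlt | heq
        · omega
        · exact absurd heq hwv
      exact Submodule.smul_mem _ _ (ih (key L w) hkw w rfl hadm.1 hadm.2)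
    have hsum : Δ v • sngl v + ∑ w ∈ T.erase v, Δ w • sngl w = Δ := by
      exact (Finset.add_sum_erase T (fun w => Δ w • sngl w) hvT).trans hT.symm
    have hsub : Δ v • sngl v = Δ - ∑ w ∈ T.erase v, Δ w • sngl w :=
      eq_sub_of_add_eq hsum
    have hexpr : sngl v
        = (Δ v)⁻¹ • (Δ - ∑ w ∈ T.erase v, Δ w • sngl w) := by
      rw [← hsub, smul_smul, inv_mul_cancel₀ hΔv, one_smul]
    rw [hexpr]
    exact Submodule.smul_mem _ _ (sub_mem hΔmem hrest)

theorem colwords_letters (p L : ℕ) (hp : 2 ≤ p) (g : List ℕ) (hg : g ∈ ColWords p L) :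
    ∀ a ∈ blockOf L g, a < p := by
  intro a ha
  unfold blockOf at ha
  have hga : a ∈ g ∨ a = 0 := by
    rcases List.mem_append.mp ha with h1 | h2
    · rcases List.mem_append.mp h1 with h3 | h4
      · right; exact List.eq_of_mem_replicate h3
      · left; exact h4
    · right; exact List.eq_of_mem_replicate h2
  rcases hga with hga | rfl
  · rcases hg with rfl | ⟨v, ⟨hv, hvL⟩, rfl⟩
    · have := List.eq_of_mem_replicate hga; omega
    · unfold Cword at hga
      rcases List.mem_append.mp hga with h1 | h2
      · have := List.eq_of_mem_replicate h1; omega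
      · rcases List.mem_append.mp h2 with h3 | h4
        · have := List.eq_of_mem_replicate h3; omega
        · exact hv.2.1 a (mem_core_mem v a h4)
  · omega

theorem combo_exists (p L : ℕ) (hp : 2 ≤ p) (hL : 2 ≤ L) (x : List ℕ → ℚ)
    (F : Finset (List ℕ)) (hF : ∀ w ∈ F, Adm p w ∧ w.length ≤ L) :
    ∃ (k : ℕ) (c : Fin k → ℚ) (g : Fin k → List ℕ),
      (∀ i, ∀ a ∈ blockOf L (g i), a < p) ∧
      ∀ w ∈ F, x w = ∑ i, (countIn w (blockOf L (g i)) : ℚ) * c i := by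
  classical
  set y : List ℕ → ℚ := fun u => if u ∈ F then x u else 0 with hydef
  have hy : y ∈ Submodule.span ℚ (GoodCols p L) := by
    have : y = ∑ w ∈ F, y w • sngl w := by
      apply pi_eq_sum_single
      intro w hw
      simp [hydef, hw]
    rw [this]
    apply Submodule.sum_mem
    intro w hw
    obtain ⟨hadm, hlen⟩ := hF w hw
    exact Submodule.smul_mem _ _ (single_mem_span p L hp hL (key L w) w rfl hadm hlen)
  obtain ⟨k, c, gv, hgv⟩ := Submodule.mem_span_set'.mp hy
  -- choose column words
  have hch : ∀ i : Fin k, ∃ h ∈ ColWords p L, colVec p L h = (gv i : (List ℕ) → ℚ) :=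
    fun i => (gv i).2
  choose g hgmem hgeq using hch
  refine ⟨k, c, g, fun i => colwords_letters p L hp (g i) (hgmem i), ?_⟩
  intro w hw
  obtain ⟨hadm, hlen⟩ := hF w hw
  have h1 : y w = x w := by simp [hydef, hw]
  have h2 := congrFun hgv w
  rw [Finset.sum_apply] at h2
  rw [← h1, ← h2]
  apply Finset.sum_congr rfl
  intro i _
  rw [← hgeq i]
  simp only [Pi.smul_apply, colVec, if_pos (⟨hadm, hlen⟩ : Adm p w ∧ w.length ≤ L),
    smul_eq_mul]
  ring

theorem nat_dense : ∀ (k : ℕ) (f : MvPolynomial (Fin k) ℚ),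
    (∀ c : Fin k → ℕ, MvPolynomial.eval (fun i => (c i : ℚ)) f = 0) → f = 0 := by
  intro k
  induction k with
  | zero =>
    intro f h
    have h0 := h (fun _ => 0)
    rw [MvPolynomial.eq_C_of_isEmpty f] at h0 ⊢
    rw [MvPolynomial.eval_C] at h0
    rw [h0, map_zero]
  | succ n ih =>
    intro f h
    have key : MvPolynomial.finSuccEquiv ℚ n f = 0 := by
      apply Polynomial.ext
      intro j
      rw [Polynomial.coeff_zero]
      apply ih
      intro c
      have hq : Polynomial.map (MvPolynomial.eval (fun i => (c i : ℚ)))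
          (MvPolynomial.finSuccEquiv ℚ n f) = 0 := by
        apply Polynomial.eq_zero_of_infinite_isRoot
        apply Set.infinite_of_injective_forall_mem
          (f := fun a : ℕ => (a : ℚ))
        · exact fun a b hab => Nat.cast_injective hab
        · intro a
          simp only [Set.mem_setOf_eq, Polynomial.IsRoot]
          rw [← MvPolynomial.eval_eq_eval_mv_eval']
          have h2 := h (Fin.cons a c)
          have h3 : (fun i => ((Fin.cons a c : Fin (n+1) → ℕ) i : ℚ))
              = Fin.cons (a : ℚ) (fun i => (c i : ℚ)) := by
            funext i
            refine Fin.cases ?_ ?_ i <;> simp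
          rw [← h3]
          exact h2
      have h4 := congrArg (fun q => Polynomial.coeff q j) hq
      simp only [Polynomial.coeff_map, Polynomial.coeff_zero] at h4
      exact h4
    have h5 := congrArg (MvPolynomial.finSuccEquiv ℚ n).symm key
    rwa [AlgEquiv.symm_apply_apply, map_zero] at h5

theorem theta0_ne_zero (p n : ℕ) : theta p 0 n ≠ 0 := by
  unfold theta
  apply Finset.card_ne_zero.mpr
  refine ⟨0, ?_⟩
  simp only [Finset.mem_filter, Finset.mem_range]
  exact ⟨by omega, by rw [Nat.choose_zero_right, padicValNat.one]⟩

theorem count_flatMap (L k : ℕ) (cc : Fin k → ℕ) (g : Fin k → List ℕ) (w : List ℕ)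
    (hw1 : w.length ≤ L) (htop : w.getD (w.length - 1) 0 ≠ 0) :
    countIn w ((((List.finRange k).flatMap fun i => List.replicate (cc i) (g i)).map
      (blockOf L)).flatten)
      = ∑ i : Fin k, cc i * countIn w (blockOf L (g i)) := by
  rw [countIn_join w L hw1 htop]
  have hgen : ∀ l : List (Fin k),
      ((l.flatMap fun i => List.replicate (cc i) (g i)).map
        (fun g' => countIn w (blockOf L g'))).sum
      = (l.map (fun i => cc i * countIn w (blockOf L (g i)))).sum := by
    intro l
    induction l with
    | nil => simp
    | cons a l ihl =>
      rw [List.flatMap_cons, List.map_append, List.sum_append, ihl, List.map_cons,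
        List.sum_cons]
      congr 1
      rw [List.map_replicate, List.sum_const_nat]
  rw [hgen, Fin.sum_univ_def]

theorem eval_congr_vars {σ : Type*} (f g : σ → ℚ) (q : MvPolynomial σ ℚ)
    (h : ∀ w ∈ q.vars, f w = g w) : MvPolynomial.eval f q = MvPolynomial.eval g q :=
  MvPolynomial.eval₂Hom_congr' rfl (fun w hw _ => h w hw) rfl

theorem aeval_eq_eval' {σ : Type*} (y : σ → ℚ) (q : MvPolynomial σ ℚ) :
    MvPolynomial.aeval y q = MvPolynomial.eval y q := by
  rw [MvPolynomial.aeval_eq_eval₂Hom]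
  congr 1

end Stmt1Aux

open Stmt1Aux

/-- uniqueness of the polynomial `P_j` in the variables `X_w`, `w ∈ W`. -/
theorem stmt1 (p j : ℕ) (hp : p.Prime)
    (P Q : MvPolynomial {w : List ℕ // Adm p w} ℚ)
    (hP : ∀ n : ℕ, (theta p j n : ℚ) =
      (theta p 0 n : ℚ) * MvPolynomial.eval (fun w => (wordCount p w.1 n : ℚ)) P)
    (hQ : ∀ n : ℕ, (theta p j n : ℚ) =
      (theta p 0 n : ℚ) * MvPolynomial.eval (fun w => (wordCount p w.1 n : ℚ)) Q) :
    P = Q := by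

  classical
  have hp2 : 2 ≤ p := hp.two_le
  set R0 : MvPolynomial {w : List ℕ // Adm p w} ℚ := P - Q with hR0
  have hev : ∀ n : ℕ,
      MvPolynomial.eval (fun w : {w : List ℕ // Adm p w} => (wordCount p w.1 n : ℚ)) R0
        = 0 := by
    intro n
    have hθ : ((theta p 0 n : ℚ)) ≠ 0 := Nat.cast_ne_zero.mpr (theta0_ne_zero p n)
    have h3 := mul_left_cancel₀ hθ ((hP n).symm.trans (hQ n))
    rw [hR0, map_sub, h3, sub_self]
  apply MvPolynomial.funext
  intro x
  suffices hmain : MvPolynomial.eval x R0 = 0 by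
    have h4 := hmain
    rw [hR0, map_sub, sub_eq_zero] at h4
    exact h4
  set L : ℕ := max 2 (R0.vars.sup fun w => w.1.length) with hLdef
  have hL2 : 2 ≤ L := le_max_left _ _
  have hLv : ∀ w ∈ R0.vars, w.1.length ≤ L := fun w hw =>
    le_trans (Finset.le_sup (f := fun w : {w : List ℕ // Adm p w} => w.1.length) hw)
      (le_max_right _ _)
  set F : Finset (List ℕ) := R0.vars.image (fun w => w.1) with hFdef
  have hF : ∀ u ∈ F, Adm p u ∧ u.length ≤ L := by
    intro u hu
    rw [hFdef, Finset.mem_image] at hu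
    obtain ⟨w, hw, rfl⟩ := hu
    exact ⟨w.2, hLv w hw⟩
  set x' : List ℕ → ℚ := fun u => if h : Adm p u then x ⟨u, h⟩ else 0 with hx'def
  obtain ⟨k, c, g, hglet, hval⟩ := combo_exists p L hp2 hL2 x' F hF
  set f : {w : List ℕ // Adm p w} → MvPolynomial (Fin k) ℚ :=
    fun w => ∑ i, MvPolynomial.C ((countIn w.1 (blockOf L (g i)) : ℚ))
      * MvPolynomial.X i with hfdef
  have hcomp : ∀ y : Fin k → ℚ,
      MvPolynomial.eval y (MvPolynomial.aeval f R0)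
        = MvPolynomial.eval
            (fun w => ∑ i, (countIn w.1 (blockOf L (g i)) : ℚ) * y i) R0 := by
    intro y
    have h1 := MvPolynomial.comp_aeval (f := f) (MvPolynomial.aeval (R := ℚ) y)
    have h2 := AlgHom.congr_fun h1 R0
    rw [AlgHom.comp_apply] at h2
    rw [aeval_eq_eval'] at h2
    rw [aeval_eq_eval'] at h2
    have h3 : ∀ w : {w : List ℕ // Adm p w}, MvPolynomial.aeval y (f w)
        = ∑ i, (countIn w.1 (blockOf L (g i)) : ℚ) * y i := by
      intro w
      rw [hfdef]
      simp [MvPolynomial.aeval_C]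
    simp only [h3] at h2
    exact h2
  have hnat : ∀ cc : Fin k → ℕ,
      MvPolynomial.eval (fun i => (cc i : ℚ)) (MvPolynomial.aeval f R0) = 0 := by
    intro cc
    rw [hcomp]
    set D : List ℕ := (((List.finRange k).flatMap fun i =>
      List.replicate (cc i) (g i)).map (blockOf L)).flatten with hDdef
    have hDlet : ∀ a ∈ D, a < p := by
      intro a ha
      rw [hDdef, List.mem_flatten] at ha
      obtain ⟨l, hl, hal⟩ := ha
      rw [List.mem_map] at hl
      obtain ⟨g', hg', rfl⟩ := hl
      rw [List.mem_flatMap] at hg'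
      obtain ⟨i, _, hgi⟩ := hg'
      have hgg : g' = g i := List.eq_of_mem_replicate hgi
      rw [hgg] at hal
      exact hglet i a hal
    have h0 := hev (Nat.ofDigits p D)
    have hagree : ∀ w ∈ R0.vars,
        (∑ i, (countIn w.1 (blockOf L (g i)) : ℚ) * ((cc i : ℕ) : ℚ))
          = (wordCount p w.1 (Nat.ofDigits p D) : ℚ) := by
      intro w hw
      have htopw : w.1.getD (w.1.length - 1) 0 ≠ 0 := w.2.2.2.1
      have hlw : w.1.length ≤ L := hLv w hw
      have hlen1 : 1 ≤ w.1.length := by have := w.2.1; omega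
      rw [wordCount_eq_countIn p (by omega) w.1 D hDlet hlen1 htopw]
      rw [hDdef, count_flatMap L k cc g w.1 hlw htopw]
      push_cast
      apply Finset.sum_congr rfl
      intro i _
      ring
    rw [eval_congr_vars _ _ R0 hagree]
    exact h0
  have hzero : MvPolynomial.aeval f R0 = 0 := nat_dense k _ hnat
  have h6 : MvPolynomial.eval
      (fun w => ∑ i, (countIn w.1 (blockOf L (g i)) : ℚ) * c i) R0 = 0 := by
    rw [← hcomp c, hzero, map_zero]
  rw [← h6]
  apply eval_congr_vars
  intro w hw
  have hwF : w.1 ∈ F := by rw [hFdef]; exact Finset.mem_image_of_mem _ hw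
  have h7 := hval w.1 hwF
  rw [hx'def] at h7
  simp only [dif_pos w.2] at h7
  rw [← h7]
end

section
/- Let p be a prime. Then T_a(x) = a+1 for 0 ≤ a < p, and for every integer n ≥ 1 and every digit a with 0 ≤ a < p one has the polynomial identity T_{pn+a}(x) = (a+1)·T_n(x) + (p−a−1)·x^{ν_p(n)+1}·T_{n−1}(x), where ν_p is the p-adic valuation. -/
open Finset

section aux

variable {p : ℕ}

private lemma legendreZ [hp : Fact p.Prime] (m : ℕ) :
    ((p : ℤ) - 1) * padicValNat p m.factorial = (m : ℤ) - ((p.digits m).sum : ℤ) := by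
  have h := sub_one_mul_padicValNat_factorial (p := p) m
  have h2 : (p.digits m).sum ≤ m := Nat.digit_sum_le p m
  have h1 : 1 ≤ p := hp.out.one_le
  have h4 := congrArg (fun x : ℕ => (x : ℤ)) h
  simp only [Nat.cast_mul, Nat.cast_sub h2, Nat.cast_sub h1, Nat.cast_one] at h4
  exact h4

private lemma chooseZ [hp : Fact p.Prime] {k n : ℕ} (h : k ≤ n) :
    ((p : ℤ) - 1) * padicValNat p (n.choose k) =
      ((p.digits k).sum : ℤ) + ((p.digits (n - k)).sum : ℤ) - ((p.digits n).sum : ℤ) := by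
  have hfac := Nat.choose_mul_factorial_mul_factorial h
  have hv : padicValNat p n.factorial =
      padicValNat p (n.choose k) + padicValNat p k.factorial +
        padicValNat p (n - k).factorial := by
    rw [← hfac,
      padicValNat.mul (Nat.mul_ne_zero (Nat.choose_pos h).ne' (Nat.factorial_ne_zero _))
        (Nat.factorial_ne_zero _),
      padicValNat.mul (Nat.choose_pos h).ne' (Nat.factorial_ne_zero _)]
  have l1 := legendreZ (p := p) n
  have l2 := legendreZ (p := p) k
  have l3 := legendreZ (p := p) (n - k)
  have hc : ((n - k : ℕ) : ℤ) = (n : ℤ) - k := by omega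
  rw [hv] at l1
  simp only [Nat.cast_add] at l1
  rw [hc] at l3
  linarith

private lemma digits_sum_mul_add (hp : 1 < p) {b : ℕ} (q : ℕ) (hb : b < p) :
    (p.digits (p * q + b)).sum = b + (p.digits q).sum := by
  rcases Nat.eq_zero_or_pos (p * q + b) with h0 | h0
  · have hq : q = 0 := by
      rcases Nat.eq_zero_or_pos q with h | h
      · exact h
      · exfalso; nlinarith
    have hb0 : b = 0 := by omega
    simp [hq, hb0]
  · rw [Nat.digits_def' hp h0, List.sum_cons, Nat.mul_add_mod,
      Nat.mod_eq_of_lt hb, Nat.mul_add_div (by omega), Nat.div_eq_of_lt hb, Nat.add_zero]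

private lemma digits_sum_pred [hp : Fact p.Prime] {n : ℕ} (hn : n ≠ 0) :
    ((p.digits n).sum : ℤ) =
      ((p.digits (n - 1)).sum : ℤ) + 1 - ((p : ℤ) - 1) * padicValNat p n := by
  have hfac : n * (n - 1).factorial = n.factorial := Nat.mul_factorial_pred (by omega)
  have hv : padicValNat p n.factorial = padicValNat p n + padicValNat p (n - 1).factorial := by
    rw [← hfac, padicValNat.mul hn (Nat.factorial_ne_zero _)]
  have l1 := legendreZ (p := p) n
  have l2 := legendreZ (p := p) (n - 1)
  have hc : ((n - 1 : ℕ) : ℤ) = (n : ℤ) - 1 := by omega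
  rw [hv] at l1
  simp only [Nat.cast_add] at l1
  rw [hc] at l2
  linarith

private lemma valB [hp : Fact p.Prime] {a b q n : ℕ} (hb : b ≤ a) (ha : a < p) (hq : q ≤ n) :
    padicValNat p ((p * n + a).choose (p * q + b)) = padicValNat p (n.choose q) := by
  have hps := hp.out.two_le
  have hmul : p * q ≤ p * n := Nat.mul_le_mul_left p hq
  have hle : p * q + b ≤ p * n + a := by omega
  have hsub : p * n + a - (p * q + b) = p * (n - q) + (a - b) := by
    have h1 : p * q + p * (n - q) = p * n := by rw [← Nat.mul_add]; congr 1; omega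
    omega
  have e1 := chooseZ (p := p) hle
  have e2 := chooseZ (p := p) hq
  rw [hsub, digits_sum_mul_add hp.out.one_lt q (show b < p by omega),
    digits_sum_mul_add hp.out.one_lt (n - q) (by omega),
    digits_sum_mul_add hp.out.one_lt n ha] at e1
  have key : ((p : ℤ) - 1) * padicValNat p ((p * n + a).choose (p * q + b)) =
      ((p : ℤ) - 1) * padicValNat p (n.choose q) := by
    rw [e1, e2]
    simp only [Nat.cast_add, Nat.cast_sub hb]
    ring
  have hne : ((p : ℤ) - 1) ≠ 0 := by
    have : (2 : ℤ) ≤ p := by exact_mod_cast hps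
    omega
  exact_mod_cast mul_left_cancel₀ hne key

private lemma valC [hp : Fact p.Prime] {a b q n : ℕ} (ha : a < b) (hb : b < p)
    (hn : 1 ≤ n) (hq : q ≤ n - 1) :
    padicValNat p ((p * n + a).choose (p * q + b)) =
      padicValNat p n + 1 + padicValNat p ((n - 1).choose q) := by
  have hps := hp.out.two_le
  have hmul : p * q ≤ p * (n - 1) := Nat.mul_le_mul_left p hq
  have h1 : p * (n - 1) + p = p * n := by
    rw [← Nat.mul_succ]; congr 1; omega
  have hle : p * q + b ≤ p * n + a := by omega
  have hsub : p * n + a - (p * q + b) = p * (n - 1 - q) + (p + a - b) := by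
    have h2 : p * q + p * (n - 1 - q) = p * (n - 1) := by rw [← Nat.mul_add]; congr 1; omega
    omega
  have e1 := chooseZ (p := p) hle
  have e2 := chooseZ (p := p) hq
  have e3 := digits_sum_pred (p := p) (show n ≠ 0 by omega)
  rw [hsub, digits_sum_mul_add hp.out.one_lt q hb,
    digits_sum_mul_add hp.out.one_lt (n - 1 - q) (by omega),
    digits_sum_mul_add hp.out.one_lt n (show a < p by omega)] at e1
  have hcast : ((p + a - b : ℕ) : ℤ) = (p : ℤ) + a - b := by omega
  simp only [Nat.cast_add] at e1 e2
  rw [hcast] at e1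
  have key : ((p : ℤ) - 1) * padicValNat p ((p * n + a).choose (p * q + b)) =
      ((p : ℤ) - 1) * ((padicValNat p n : ℤ) + 1 + padicValNat p ((n - 1).choose q)) := by
    rw [e1]; linarith
  have hne : ((p : ℤ) - 1) ≠ 0 := by
    have : (2 : ℤ) ≤ p := by exact_mod_cast hps
    omega
  have := mul_left_cancel₀ hne key
  exact_mod_cast this

private lemma sum_range_mul {M : Type*} [AddCommMonoid M] (g : ℕ → M) (p n : ℕ) :
    ∑ t ∈ range (p * n), g t = ∑ q ∈ range n, ∑ b ∈ range p, g (p * q + b) := by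
  induction n with
  | zero => simp
  | succ n ih => rw [Nat.mul_succ, Finset.sum_range_add, ih, Finset.sum_range_succ]

end aux

private lemma part1 {p : ℕ} (hp : p.Prime) (a : ℕ) (ha : a < p) :
    Tpoly p a = Polynomial.C ((a : ℤ) + 1) := by
  unfold Tpoly
  have hz : ∀ t ∈ range (a + 1),
      (Polynomial.X : Polynomial ℤ) ^ padicValNat p (a.choose t) = 1 := by
    intro t ht
    rw [mem_range] at ht
    have hdvd : a.choose t ∣ a.factorial :=
      ⟨t.factorial * (a - t).factorial, by
        rw [← Nat.choose_mul_factorial_mul_factorial (show t ≤ a by omega), mul_assoc]⟩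
    have hnd : ¬ p ∣ a.choose t := fun hd =>
      absurd ((Nat.Prime.dvd_factorial hp).mp (hd.trans hdvd)) (by omega)
    rw [padicValNat.eq_zero_of_not_dvd hnd, pow_zero]
  rw [Finset.sum_congr rfl hz, Finset.sum_const, card_range, nsmul_eq_mul, mul_one]
  push_cast
  simp [Polynomial.C_add, Polynomial.C_1]

/-- the fundamental recurrence for the polynomials `T_n(x)`. -/
theorem stmt2 (p : ℕ) (hp : p.Prime) :
    (∀ a : ℕ, a < p → Tpoly p a = Polynomial.C ((a : ℤ) + 1)) ∧
    ∀ n : ℕ, 1 ≤ n → ∀ a : ℕ, a < p →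
      Tpoly p (p * n + a) =
        Polynomial.C ((a : ℤ) + 1) * Tpoly p n +
          Polynomial.C ((p : ℤ) - a - 1) * Polynomial.X ^ (padicValNat p n + 1) *
            Tpoly p (n - 1) := by
  haveI : Fact p.Prime := ⟨hp⟩
  refine ⟨part1 hp, fun n hn a ha => ?_⟩
  set f : ℕ → Polynomial ℤ :=
    fun t => Polynomial.X ^ padicValNat p ((p * n + a).choose t) with hf
  have hsplit : Tpoly p (p * n + a)
      = ∑ q ∈ range n, ∑ b ∈ range p, f (p * q + b) + ∑ b ∈ range (a + 1), f (p * n + b) := by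
    rw [Tpoly, show p * n + a + 1 = p * n + (a + 1) from rfl, Finset.sum_range_add,
      sum_range_mul]
  have hinner : ∀ q ∈ range n, ∑ b ∈ range p, f (p * q + b)
      = ∑ b ∈ range (a + 1), f (p * q + b) + ∑ b ∈ Ico (a + 1) p, f (p * q + b) := by
    intro q _
    simp only [range_eq_Ico]
    exact (Finset.sum_Ico_consecutive _ (Nat.zero_le (a + 1)) (by omega : a + 1 ≤ p)).symm
  have hB : ∀ q, q ≤ n → ∀ b ∈ range (a + 1),
      f (p * q + b) = Polynomial.X ^ padicValNat p (n.choose q) := by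
    intro q hq b hb
    rw [mem_range] at hb
    rw [hf]
    simp only
    rw [valB (by omega : b ≤ a) ha hq]
  have hC : ∀ q ∈ range n, ∀ b ∈ Ico (a + 1) p,
      f (p * q + b) = Polynomial.X ^ (padicValNat p n + 1) *
        Polynomial.X ^ padicValNat p ((n - 1).choose q) := by
    intro q hq b hb
    rw [mem_range] at hq
    rw [mem_Ico] at hb
    rw [hf]
    simp only
    rw [valC (by omega : a < b) hb.2 hn (by omega : q ≤ n - 1), pow_add]
  rw [hsplit, Finset.sum_congr rfl hinner, Finset.sum_add_distrib, add_right_comm]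
  have hstep1 : ∑ q ∈ range n, ∑ b ∈ range (a + 1), f (p * q + b)
        + ∑ b ∈ range (a + 1), f (p * n + b)
      = Polynomial.C ((a : ℤ) + 1) * Tpoly p n := by
    have h1 : ∀ q ∈ range (n + 1), ∑ b ∈ range (a + 1), f (p * q + b)
        = (a + 1) • Polynomial.X ^ padicValNat p (n.choose q) := by
      intro q hq
      rw [mem_range] at hq
      rw [Finset.sum_congr rfl (hB q (by omega)), Finset.sum_const, card_range]
    rw [← Finset.sum_range_succ (fun q => ∑ b ∈ range (a + 1), f (p * q + b)) n,
      Finset.sum_congr rfl h1, ← Finset.smul_sum, nsmul_eq_mul, Tpoly]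
    push_cast
    simp [Polynomial.C_add, Polynomial.C_1]
  have hstep2 : ∑ q ∈ range n, ∑ b ∈ Ico (a + 1) p, f (p * q + b)
      = Polynomial.C ((p : ℤ) - a - 1) * Polynomial.X ^ (padicValNat p n + 1) *
          Tpoly p (n - 1) := by
    have h2 : ∀ q ∈ range n, ∑ b ∈ Ico (a + 1) p, f (p * q + b)
        = (p - (a + 1)) • (Polynomial.X ^ (padicValNat p n + 1) *
            Polynomial.X ^ padicValNat p ((n - 1).choose q)) := by
      intro q hq
      rw [Finset.sum_congr rfl (hC q hq), Finset.sum_const, Nat.card_Ico]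
    rw [Finset.sum_congr rfl h2, ← Finset.smul_sum, ← Finset.mul_sum, nsmul_eq_mul, Tpoly,
      show n - 1 + 1 = n by omega]
    have hcast : ((p - (a + 1) : ℕ) : Polynomial ℤ) = Polynomial.C ((p : ℤ) - a - 1) := by
      have : ((p - (a + 1) : ℕ) : ℤ) = (p : ℤ) - a - 1 := by omega
      rw [← Polynomial.C_eq_natCast, this]
    rw [hcast, mul_assoc]
  rw [hstep1, hstep2]
end

section
/- Let p be a prime. Define θ̃_p(k,n) := θ_p((k−s_p(n))/(p−1), n) if k ≥ s_p(n) and (p−1) divides k−s_p(n), and θ̃_p(k,n) := 0 otherwise; moreover set θ̃_p(k,n) := 0 whenever k < 0 or n < 0. Then for all integers n ≥ 0, k ≥ 0 and all digits a with 0 ≤ a < p one has θ̃_p(k, pn+a) = (a+1)·θ̃_p(k−a, n) + (p−a−1)·θ̃_p(k−p−a, n−1). -/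
open Finset

/-- `θ̃_p(k,n)` for integer arguments, zero when `k < 0` or `n < 0`. -/
def thetaTilde (p : ℕ) (k n : ℤ) : ℕ :=
  if 0 ≤ k ∧ 0 ≤ n then
    if digitSum p n.toNat ≤ k.toNat ∧ (p - 1) ∣ (k.toNat - digitSum p n.toNat) then
      theta p ((k.toNat - digitSum p n.toNat) / (p - 1)) n.toNat
    else 0
  else 0

section AuxStmt3

variable {p : ℕ}

lemma digitSum_base (hp : 1 < p) {s b : ℕ} (hb : b < p) :
    digitSum p (p * s + b) = b + digitSum p s := by
  rcases Nat.eq_zero_or_pos (p * s + b) with h | h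
  · have hs : s = 0 := by
      rcases Nat.eq_zero_or_pos s with rfl | hs'
      · rfl
      · exfalso; nlinarith
    have hb0 : b = 0 := by omega
    simp [hs, hb0, digitSum]
  · unfold digitSum
    rw [Nat.digits_def' hp h]
    rw [List.sum_cons, Nat.mul_add_mod, Nat.mod_eq_of_lt hb,
      Nat.mul_add_div (by omega), Nat.div_eq_of_lt hb, Nat.add_zero]

lemma digitSum_succ_le (hp : 1 < p) : ∀ a : ℕ, digitSum p (a + 1) ≤ digitSum p a + 1 := by
  intro a
  induction a using Nat.strong_induction_on with
  | _ a ih =>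
    obtain ⟨q, r, hr, rfl⟩ : ∃ q r, r < p ∧ a = p * q + r :=
      ⟨a / p, a % p, Nat.mod_lt _ (by omega), (Nat.div_add_mod a p).symm⟩
    rcases lt_or_eq_of_le (by omega : r + 1 ≤ p) with h | h
    · rw [show p * q + r + 1 = p * q + (r + 1) by ring, digitSum_base hp h, digitSum_base hp hr]
      omega
    · rw [show p * q + r + 1 = p * (q + 1) + 0 by rw [Nat.mul_succ]; omega, digitSum_base hp (by omega),
        digitSum_base hp hr]
      have hq : q < p * q + r := by nlinarith
      have := ih q hq
      omega

lemma digitSum_add_le (hp : 1 < p) : ∀ x a b : ℕ, a + b = x →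
    digitSum p (a + b) ≤ digitSum p a + digitSum p b := by
  intro x
  induction x using Nat.strong_induction_on with
  | _ x ih =>
    intro a b hab
    rcases Nat.eq_zero_or_pos x with rfl | hx
    · have : a = 0 ∧ b = 0 := by omega
      simp [this.1, this.2]
    obtain ⟨qa, ra, hra, rfl⟩ : ∃ q r, r < p ∧ a = p * q + r :=
      ⟨a / p, a % p, Nat.mod_lt _ (by omega), (Nat.div_add_mod a p).symm⟩
    obtain ⟨qb, rb, hrb, rfl⟩ : ∃ q r, r < p ∧ b = p * q + r :=
      ⟨b / p, b % p, Nat.mod_lt _ (by omega), (Nat.div_add_mod b p).symm⟩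
    have hqlt : qa + qb < x := by nlinarith
    have hih := ih (qa + qb) hqlt qa qb rfl
    rcases lt_or_ge (ra + rb) p with h | h
    · rw [show p * qa + ra + (p * qb + rb) = p * (qa + qb) + (ra + rb) by ring,
        digitSum_base hp h, digitSum_base hp hra, digitSum_base hp hrb]
      omega
    · rw [show p * qa + ra + (p * qb + rb) = p * (qa + qb + 1) + (ra + rb - p) by
        rw [Nat.mul_succ, Nat.mul_add]; omega,
        digitSum_base hp (by omega), digitSum_base hp hra, digitSum_base hp hrb]
      have := digitSum_succ_le hp (qa + qb)
      omega

lemma digitSum_key (hp : p.Prime) {t n : ℕ} (h : t ≤ n) :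
    digitSum p t + digitSum p (n - t) = digitSum p n + (p - 1) * padicValNat p (n.choose t) := by
  haveI : Fact p.Prime := ⟨hp⟩
  have h1 := sub_one_mul_padicValNat_choose_eq_sub_sum_digits (p := p) h
  have h2 : digitSum p n ≤ digitSum p t + digitSum p (n - t) := by
    have := digitSum_add_le hp.one_lt (t + (n - t)) t (n - t) rfl
    rwa [Nat.add_sub_cancel' h] at this
  unfold digitSum at *
  omega

/-- the digit-sum count. -/
def gcount (p k n : ℕ) : ℕ :=
  ((Finset.range (n + 1)).filter fun t => digitSum p t + digitSum p (n - t) = k).card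

lemma thetaTilde_eq (hp : p.Prime) (k n : ℕ) :
    thetaTilde p (k : ℤ) (n : ℤ) = gcount p k n := by
  have hp1 : 1 < p := hp.one_lt
  unfold thetaTilde
  rw [if_pos ⟨Int.ofNat_nonneg k, Int.ofNat_nonneg n⟩]
  simp only [Int.toNat_natCast]
  split_ifs with hcond
  · obtain ⟨hle, j, hj⟩ := hcond
    unfold theta gcount
    congr 1
    apply Finset.filter_congr
    intro t ht
    simp only [Finset.mem_range] at ht
    have hk := digitSum_key hp (by omega : t ≤ n)
    have hjj : (p - 1) * j = k - digitSum p n := hj.symm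
    constructor
    · intro hv
      have hdiv : (k - digitSum p n) / (p - 1) = j := by
        rw [hjj.symm, Nat.mul_div_cancel_left _ (by omega)]
      have hvj : padicValNat p (n.choose t) = j := by omega
      rw [hvj] at hk
      omega
    · intro hv
      have h1 : (p - 1) * padicValNat p (n.choose t) = (p - 1) * j := by omega
      have h2 : padicValNat p (n.choose t) = j := Nat.eq_of_mul_eq_mul_left (by omega) h1
      rw [h2, hjj.symm, Nat.mul_div_cancel_left _ (by omega)]
  · unfold gcount
    symm
    rw [Finset.card_eq_zero, Finset.filter_eq_empty_iff]
    intro t ht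
    simp only [Finset.mem_range] at ht
    have hk := digitSum_key hp (by omega : t ≤ n)
    intro hcontra
    exact hcond ⟨by omega, padicValNat p (n.choose t), by omega⟩

lemma thetaTilde_neg {k n : ℤ} (h : ¬ (0 ≤ k ∧ 0 ≤ n)) : thetaTilde p k n = 0 := by
  unfold thetaTilde; rw [if_neg h]

lemma gcount_rec (hp : 1 < p) {a : ℕ} (ha : a < p) (k n : ℕ) :
    gcount p k (p * n + a) =
      (a + 1) * ((Finset.range (n + 1)).filter
          fun s => digitSum p s + digitSum p (n - s) + a = k).card +
      (p - 1 - a) * ((Finset.range n).filter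
          fun s => digitSum p s + digitSum p (n - 1 - s) + (p + a) = k).card := by
  classical
  set A := ((Finset.range (n + 1)).filter
      fun s => digitSum p s + digitSum p (n - s) + a = k) ×ˢ Finset.range (a + 1) with hA
  set B := ((Finset.range n).filter
      fun s => digitSum p s + digitSum p (n - 1 - s) + (p + a) = k) ×ˢ Finset.Ico (a + 1) p with hB
  have hdisj : Disjoint A B := by
    rw [Finset.disjoint_left]
    rintro ⟨s, b⟩ hmA hmB
    simp only [hA, hB, Finset.mem_product, Finset.mem_Ico, Finset.mem_range,
      Finset.mem_filter] at hmA hmB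
    omega
  have hcard : gcount p k (p * n + a) = (A ∪ B).card := by
    unfold gcount
    apply Finset.card_nbij' (fun t => (t / p, t % p)) (fun x => p * x.1 + x.2)
    · intro t htm
      simp only [Finset.mem_coe, Finset.mem_filter, Finset.mem_range] at htm
      obtain ⟨htle, htsum⟩ := htm
      obtain ⟨s, b, hb, hts⟩ : ∃ s b, b < p ∧ t = p * s + b :=
        ⟨t / p, t % p, Nat.mod_lt _ (by omega), (Nat.div_add_mod t p).symm⟩
      have hdiv : t / p = s := by rw [hts, Nat.mul_add_div (by omega), Nat.div_eq_of_lt hb]; omega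
      have hmod : t % p = b := by rw [hts, Nat.mul_add_mod, Nat.mod_eq_of_lt hb]
      simp only [Finset.mem_coe]
      rw [hdiv, hmod]
      rcases le_or_gt b a with hba | hba
      · -- b ≤ a : goes to A
        have hsn : s ≤ n := by by_contra hc; push_neg at hc; nlinarith
        obtain ⟨d, hd⟩ : ∃ d, n = s + d := ⟨n - s, by omega⟩
        have hpn : p * n = p * s + p * d := by rw [hd, Nat.mul_add]
        have hsub : p * n + a - (p * s + b) = p * d + (a - b) := by omega
        rw [hts, digitSum_base hp hb] at htsum
        rw [hsub, digitSum_base hp (by omega)] at htsum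
        apply Finset.mem_union_left
        simp only [hA, Finset.mem_product, Finset.mem_filter, Finset.mem_range]
        have hns : n - s = d := by omega
        rw [hns]
        refine ⟨⟨by omega, by omega⟩, by omega⟩
      · -- b > a : goes to B
        have hsn : s < n := by by_contra hc; push_neg at hc; nlinarith
        obtain ⟨d, hd⟩ : ∃ d, n = s + d + 1 := ⟨n - s - 1, by omega⟩
        have hpn : p * n = p * s + p * d + p := by rw [hd]; ring
        have hsub : p * n + a - (p * s + b) = p * d + (p + a - b) := by omega
        rw [hts, digitSum_base hp hb] at htsum
        rw [hsub, digitSum_base hp (by omega)] at htsum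
        apply Finset.mem_union_right
        simp only [hB, Finset.mem_product, Finset.mem_filter, Finset.mem_range, Finset.mem_Ico]
        have hns : n - 1 - s = d := by omega
        rw [hns]
        refine ⟨⟨by omega, by omega⟩, by omega, by omega⟩
    · rintro ⟨s, b⟩ hm
      simp only [Finset.mem_coe, Finset.mem_filter, Finset.mem_range]
      rcases Finset.mem_union.mp hm with hmA | hmB
      · simp only [hA, Finset.mem_product, Finset.mem_filter, Finset.mem_range] at hmA
        obtain ⟨⟨hsn, hsum⟩, hba⟩ := hmA
        have hsn' : s ≤ n := by omega
        obtain ⟨d, hd⟩ : ∃ d, n = s + d := ⟨n - s, by omega⟩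
        have hpn : p * n = p * s + p * d := by rw [hd, Nat.mul_add]
        have hle : p * s + b ≤ p * n + a := by omega
        have hsub : p * n + a - (p * s + b) = p * d + (a - b) := by omega
        refine ⟨by omega, ?_⟩
        rw [digitSum_base hp (by omega), hsub, digitSum_base hp (by omega)]
        have hns : n - s = d := by omega
        rw [hns] at hsum
        omega
      · simp only [hB, Finset.mem_product, Finset.mem_filter, Finset.mem_range,
          Finset.mem_Ico] at hmB
        obtain ⟨⟨hsn, hsum⟩, hab, hbp⟩ := hmB
        obtain ⟨d, hd⟩ : ∃ d, n = s + d + 1 := ⟨n - s - 1, by omega⟩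
        have hpn : p * n = p * s + p * d + p := by rw [hd]; ring
        have hle : p * s + b ≤ p * n + a := by omega
        have hsub : p * n + a - (p * s + b) = p * d + (p + a - b) := by omega
        refine ⟨by omega, ?_⟩
        rw [digitSum_base hp (by omega), hsub, digitSum_base hp (by omega)]
        have hns : n - 1 - s = d := by omega
        rw [hns] at hsum
        omega
    · intro t _
      exact Nat.div_add_mod t p
    · rintro ⟨s, b⟩ hm
      have hbp : b < p := by
        rcases Finset.mem_union.mp hm with hmA | hmB
        · simp only [hA, Finset.mem_product, Finset.mem_range] at hmA; omega
        · simp only [hB, Finset.mem_product, Finset.mem_Ico] at hmB; omega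
      have h1 : (p * s + b) / p = s := by
        rw [Nat.mul_add_div (by omega), Nat.div_eq_of_lt hbp]; omega
      have h2 : (p * s + b) % p = b := by rw [Nat.mul_add_mod, Nat.mod_eq_of_lt hbp]
      simp [h1, h2]
  rw [hcard, Finset.card_union_of_disjoint hdisj, hA, hB, Finset.card_product,
    Finset.card_product, Finset.card_range, Nat.card_Ico]
  have : p - (a + 1) = p - 1 - a := by omega
  rw [this]
  ring

end AuxStmt3

/-- the simplified recurrence for `θ̃_p`. -/
theorem stmt3 (p : ℕ) (hp : p.Prime) (n k a : ℕ) (ha : a < p) :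
    thetaTilde p (k : ℤ) ((p * n + a : ℕ) : ℤ) =
      (a + 1) * thetaTilde p ((k : ℤ) - a) (n : ℤ) +
        (p - a - 1) * thetaTilde p ((k : ℤ) - p - a) ((n : ℤ) - 1) := by
  have hp1 := hp.one_lt
  have e1 : ((Finset.range (n + 1)).filter
      fun s => digitSum p s + digitSum p (n - s) + a = k).card
      = thetaTilde p ((k : ℤ) - a) (n : ℤ) := by
    rcases le_or_gt a k with h | h
    · rw [show (k : ℤ) - a = ((k - a : ℕ) : ℤ) by omega, thetaTilde_eq hp]
      unfold gcount
      apply congrArg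
      apply Finset.filter_congr
      intro s _
      omega
    · rw [thetaTilde_neg (by omega)]
      rw [Finset.card_eq_zero, Finset.filter_eq_empty_iff]
      intro s _
      omega
  have e2 : ((Finset.range n).filter
      fun s => digitSum p s + digitSum p (n - 1 - s) + (p + a) = k).card
      = thetaTilde p ((k : ℤ) - p - a) ((n : ℤ) - 1) := by
    rcases Nat.eq_zero_or_pos n with rfl | hn
    · rw [thetaTilde_neg (by omega)]
      simp
    rcases le_or_gt (p + a) k with h | h
    · rw [show (k : ℤ) - p - a = ((k - p - a : ℕ) : ℤ) by omega,
        show (n : ℤ) - 1 = ((n - 1 : ℕ) : ℤ) by omega, thetaTilde_eq hp]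
      unfold gcount
      rw [show n - 1 + 1 = n by omega]
      apply congrArg
      apply Finset.filter_congr
      intro s _
      omega
    · rw [thetaTilde_neg (by omega)]
      rw [Finset.card_eq_zero, Finset.filter_eq_empty_iff]
      intro s _
      omega
  rw [thetaTilde_eq hp, gcount_rec hp1 ha, e1, e2, Nat.sub_right_comm]
end

section
/- Let p be a prime and n ≥ 1 an integer, and write n = c·p^λ + m with λ ≥ 0, 1 ≤ c ≤ p−1 and 0 ≤ m < p^λ (so that c is the leading base-p digit of n). Then the degree of the polynomial T_n(x) equals λ − ν_p(m+1); equivalently, max_{0≤t≤n} ν_p(binom(n,t)) = λ − ν_p(m+1). -/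
open Finset

private lemma mod_eq_sub_one {q a : ℕ} (hq : 0 < q) (h : q ∣ a + 1) : a % q = q - 1 := by
  have hd : a = q * (a / q) + a % q := (Nat.div_add_mod a q).symm
  have h2 : q ∣ a % q + 1 := by
    have : a % q + 1 = (a + 1) - q * (a / q) := by omega
    rw [this]
    exact Nat.dvd_sub h ⟨a / q, rfl⟩
  have h3 : q ≤ a % q + 1 := Nat.le_of_dvd (Nat.succ_pos _) h2
  have h4 : a % q < q := Nat.mod_lt _ hq
  omega

private theorem sup_eq_aux (p n c l m : ℕ) (hp : p.Prime) (hn1 : 1 ≤ n)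
    (hn : n = c * p ^ l + m) (hc1 : 1 ≤ c) (hc2 : c ≤ p - 1) (hm : m < p ^ l) :
    (Finset.range (n + 1)).sup (fun t => padicValNat p (n.choose t)) =
      l - padicValNat p (m + 1) := by
  haveI : Fact p.Prime := ⟨hp⟩
  set s := padicValNat p (m + 1) with hs
  have hp1 : 1 < p := hp.one_lt
  have hps : p ^ s ∣ m + 1 := pow_padicValNat_dvd
  have hsl : s ≤ l := by
    have h1 : p ^ s ≤ p ^ l := le_trans (Nat.le_of_dvd (Nat.succ_pos m) hps) hm
    exact (Nat.pow_le_pow_iff_right hp1).mp h1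
  have hpl : 0 < p ^ l := Nat.pow_pos (by omega)
  have hnlt : n < p ^ (l + 1) := by
    have h1 : c * p ^ l ≤ (p - 1) * p ^ l := Nat.mul_le_mul_right _ hc2
    have h3 : p ^ (l + 1) = p * p ^ l := by rw [pow_succ, mul_comm]
    have h4 : p ^ l ≤ p * p ^ l := Nat.le_mul_of_pos_left _ (by omega)
    have h2 : (p - 1) * p ^ l + p ^ l = p ^ (l + 1) := by
      rw [h3, Nat.sub_one_mul]; omega
    omega
  have hlog : Nat.log p n < l + 1 := Nat.log_lt_of_lt_pow (by omega) hnlt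
  -- n mod p^i = p^i - 1 for i ≤ s
  have hnm : ∀ i, i ≤ l → n % p ^ i = m % p ^ i := by
    intro i hil
    have hdl : p ^ i ∣ c * p ^ l := Dvd.dvd.mul_left (pow_dvd_pow p hil) c
    obtain ⟨k, hk⟩ := hdl
    rw [hn, hk, Nat.add_comm, Nat.add_mul_mod_self_left]
  -- upper bound
  have hub : ∀ t, t ≤ n → padicValNat p (n.choose t) ≤ l - s := by
    intro t ht
    rw [padicValNat_choose ht hlog]
    have hsub : (Finset.Ico 1 (l+1)).filter
        (fun i => p ^ i ≤ t % p ^ i + (n - t) % p ^ i) ⊆ Finset.Ico (s+1) (l+1) := by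
      intro i hi
      simp only [Finset.mem_filter, Finset.mem_Ico] at hi ⊢
      obtain ⟨⟨hi1, hi2⟩, hcar⟩ := hi
      refine ⟨?_, hi2⟩
      by_contra hcon
      push_neg at hcon
      have his : i ≤ s := by omega
      have hqpos : 0 < p ^ i := Nat.pow_pos (by omega)
      have hdm : p ^ i ∣ m + 1 := dvd_trans (pow_dvd_pow p his) hps
      have hm1 : m % p ^ i = p ^ i - 1 := mod_eq_sub_one hqpos hdm
      have hn1' : n % p ^ i = p ^ i - 1 := by rw [hnm i (by omega), hm1]
      have hsum : (t % p ^ i + (n - t) % p ^ i) % p ^ i = p ^ i - 1 := by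
        rw [← Nat.add_mod, Nat.add_sub_cancel' ht, hn1']
      have h5 : t % p ^ i < p ^ i := Nat.mod_lt _ hqpos
      have h6 : (n - t) % p ^ i < p ^ i := Nat.mod_lt _ hqpos
      have h7 : (t % p ^ i + (n - t) % p ^ i) % p ^ i
          = t % p ^ i + (n - t) % p ^ i - p ^ i := by
        rw [Nat.mod_eq_sub_mod hcar, Nat.mod_eq_of_lt (by omega)]
      omega
    calc _ ≤ (Finset.Ico (s+1) (l+1)).card := Finset.card_le_card hsub
    _ = l - s := by rw [Nat.card_Ico]; omega
  -- witness
  have hwle : m + 1 ≤ n := by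
    have : p ^ l ≤ c * p ^ l := Nat.le_mul_of_pos_left _ (by omega)
    omega
  have hlb : l - s ≤ padicValNat p (n.choose (m + 1)) := by
    rw [padicValNat_choose hwle hlog]
    have hsub : Finset.Ico (s+1) (l+1) ⊆ (Finset.Ico 1 (l+1)).filter
        (fun i => p ^ i ≤ (m+1) % p ^ i + (n - (m+1)) % p ^ i) := by
      intro i hi
      simp only [Finset.mem_filter, Finset.mem_Ico] at hi ⊢
      obtain ⟨hi1, hi2⟩ := hi
      refine ⟨⟨by omega, hi2⟩, ?_⟩
      have hqpos : 0 < p ^ i := Nat.pow_pos (by omega)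
      have hu : n - (m+1) = c * p ^ l - 1 := by omega
      have hdl : p ^ i ∣ c * p ^ l := Dvd.dvd.mul_left (pow_dvd_pow p (by omega)) c
      have hu1 : (n - (m+1)) % p ^ i = p ^ i - 1 := by
        rw [hu]
        apply mod_eq_sub_one hqpos
        have : c * p ^ l - 1 + 1 = c * p ^ l := by
          have : p ^ l ≤ c * p ^ l := Nat.le_mul_of_pos_left _ (by omega)
          omega
        rw [this]; exact hdl
      have hne : 1 ≤ (m + 1) % p ^ i := by
        rcases Nat.eq_zero_or_pos ((m + 1) % p ^ i) with h0 | h0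
        · have : p ^ i ∣ m + 1 := Nat.dvd_of_mod_eq_zero h0
          have := (padicValNat_dvd_iff_le (by omega)).mp this
          omega
        · exact h0
      calc p ^ i = 1 + (p ^ i - 1) := by omega
      _ ≤ (m + 1) % p ^ i + (n - (m + 1)) % p ^ i := Nat.add_le_add hne (le_of_eq hu1.symm)
    have h9 : l - s ≤ (Finset.Ico (s+1) (l+1)).card := by rw [Nat.card_Ico]; omega
    exact le_trans h9 (Finset.card_le_card hsub)
  have hmem : m + 1 ∈ Finset.range (n + 1) := Finset.mem_range.mpr (by omega)
  exact le_antisymm (Finset.sup_le fun t ht => hub t (by simpa [Nat.lt_succ_iff] using ht))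
    (le_trans hlb (Finset.le_sup (f := fun t => padicValNat p (n.choose t)) hmem))

/-- the degree of `T_n(x)` equals `λ − ν_p(m+1)` where `n = c·p^λ + m`,
`1 ≤ c ≤ p−1`, `0 ≤ m < p^λ`; equivalently `max_{0≤t≤n} ν_p(binom n t) = λ − ν_p(m+1)`. -/
theorem stmt4 (p n c l m : ℕ) (hp : p.Prime) (hn1 : 1 ≤ n)
    (hn : n = c * p ^ l + m) (hc1 : 1 ≤ c) (hc2 : c ≤ p - 1) (hm : m < p ^ l) :
    (Tpoly p n).natDegree = l - padicValNat p (m + 1) ∧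
    (Finset.range (n + 1)).sup (fun t => padicValNat p (n.choose t)) =
      l - padicValNat p (m + 1) := by
  have hsup := sup_eq_aux p n c l m hp hn1 hn hc1 hc2 hm
  refine ⟨?_, hsup⟩
  have hle : (Tpoly p n).natDegree ≤ l - padicValNat p (m + 1) := by
    apply Polynomial.natDegree_sum_le_of_forall_le
    intro t ht
    rw [Polynomial.natDegree_X_pow]
    exact hsup ▸ Finset.le_sup (f := fun t => padicValNat p (n.choose t)) ht
  obtain ⟨t0, ht0, hv0⟩ := Finset.exists_mem_eq_sup (Finset.range (n + 1))
    (Finset.nonempty_range_iff.mpr (by omega)) (fun t => padicValNat p (n.choose t))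
  have hv0' : padicValNat p (n.choose t0) = l - padicValNat p (m + 1) := by
    rw [← hv0, hsup]
  have hcoeff : (Tpoly p n).coeff (l - padicValNat p (m + 1)) ≠ 0 := by
    rw [Tpoly, Polynomial.finset_sum_coeff]
    have hco : ∀ t, ((Polynomial.X : Polynomial ℤ) ^ padicValNat p (n.choose t)).coeff
        (l - padicValNat p (m + 1)) =
        if l - padicValNat p (m + 1) = padicValNat p (n.choose t) then 1 else 0 :=
      fun t => Polynomial.coeff_X_pow _ _
    rw [Finset.sum_congr rfl fun t _ => hco t]
    have hpos : (0 : ℤ) < ∑ t ∈ Finset.range (n + 1),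
        if l - padicValNat p (m + 1) = padicValNat p (n.choose t) then 1 else 0 := by
      apply Finset.sum_pos'
      · intro i _
        split <;> norm_num
      · exact ⟨t0, ht0, by rw [if_pos hv0'.symm]; norm_num⟩
    exact ne_of_gt hpos
  exact le_antisymm hle (Polynomial.le_natDegree_of_ne_zero hcoeff)
end

section
/- Let p be a prime and v ∈ W̃ ∪ {ε}. Then one has the identity of rational functions T̄_v = ∏_{w ∈ W̃} (T̄_w · T̄_{w_{LR}} / (T̄_{w_R} · T̄_{w_L}))^{|v|_w} = ∏_{w ∈ W̃} r_w^{|v|_w}, where the product is finite because |v|_w = 0 for all but finitely many w ∈ W̃. -/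
open Finset

namespace S5

variable {p : ℕ}

lemma digit_zero (p i : ℕ) : digit p 0 i = 0 := by simp [digit]

lemma digit_div (p n i : ℕ) : digit p (n / p) i = digit p n (i + 1) := by
  unfold digit
  rw [Nat.div_div_eq_div_mul, ← pow_succ']

lemma digit_div_pow (p n i k : ℕ) : digit p (n / p ^ i) k = digit p n (i + k) := by
  unfold digit
  rw [Nat.div_div_eq_div_mul, ← pow_add]

lemma pow_le_of_digit_ne (hp : 1 < p) {n i : ℕ} (h : digit p n i ≠ 0) : p ^ i ≤ n := by
  by_contra hlt
  push_neg at hlt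
  have : n / p ^ i = 0 := Nat.div_eq_of_lt hlt
  simp [digit, this] at h

/-- `n % p^(k+1) = n % p + p * (n/p % p^k)` -/
lemma mod_pow_succ (hp : 0 < p) (n k : ℕ) :
    n % p ^ (k + 1) = n % p + p * (n / p % p ^ k) := by
  have h1 : n % p + p * (n / p % p ^ k) < p ^ (k + 1) := by
    have h2 : n % p < p := Nat.mod_lt _ hp
    have h3 : n / p % p ^ k < p ^ k := Nat.mod_lt _ (Nat.pow_pos hp)
    calc n % p + p * (n / p % p ^ k) ≤ (p - 1) + p * (p ^ k - 1) := by
          refine Nat.add_le_add (by omega) (Nat.mul_le_mul_left _ (by omega))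
        _ < p ^ (k + 1) := by
          have : 1 ≤ p ^ k := Nat.one_le_pow _ _ hp
          have := Nat.mul_le_mul_left p this
          rw [pow_succ]
          rw [Nat.mul_sub, Nat.mul_comm p (p^k)] at *
          omega
  conv_lhs => rw [← Nat.div_add_mod n p]
  conv_lhs => rw [← Nat.div_add_mod (n / p) (p ^ k)]
  rw [Nat.mul_add, ← Nat.mul_assoc, ← pow_succ', Nat.add_assoc, Nat.mul_add_mod]
  rw [Nat.mod_eq_of_lt (by omega)]
  omega

end S5

namespace S5

lemma mod_pow_div (hp : 0 < p) (n k : ℕ) : n % p ^ (k + 1) / p = n / p % p ^ k := by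
  rw [mod_pow_succ hp, Nat.add_mul_div_left _ _ hp, Nat.div_eq_of_lt (Nat.mod_lt _ hp)]
  omega

/-- `n % p^(k+1) = p^k * digit + n % p^k` -/
lemma mod_pow_succ_digit (hp : 0 < p) (n k : ℕ) :
    n % p ^ (k + 1) = p ^ k * digit p n k + n % p ^ k := by
  induction k generalizing n with
  | zero => simp [digit, Nat.mod_one]
  | succ k ih =>
    rw [mod_pow_succ hp n (k+1), ih (n / p), mod_pow_succ hp n k, digit_div]
    ring

lemma digit_mod_pow (hp : 0 < p) (n m k : ℕ) :
    digit p (n % p ^ m) k = if k < m then digit p n k else 0 := by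
  induction k generalizing n m with
  | zero =>
    cases m with
    | zero => simp [digit, Nat.mod_one]
    | succ m =>
      have : (n % p ^ (m + 1)) % p = n % p := Nat.mod_mod_of_dvd _ (dvd_pow_self p (Nat.succ_ne_zero m))
      simp [digit, this]
  | succ k ih =>
    cases m with
    | zero => simp [digit, Nat.mod_one]
    | succ m =>
      rw [← digit_div, mod_pow_div hp, ih, ← digit_div]
      simp [Nat.succ_lt_succ_iff]

lemma digit_mod_pow_lt (hp : 0 < p) (n m k : ℕ) (h : k < m) :
    digit p (n % p ^ m) k = digit p n k := by
  rw [digit_mod_pow hp, if_pos h]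

/-- bridge between `digits` and `digit` -/
lemma digits_getD (hp : 1 < p) (m k : ℕ) : (Nat.digits p m).getD k 0 = digit p m k := by
  induction k generalizing m with
  | zero =>
    rcases Nat.eq_zero_or_pos m with rfl | hm
    · simp [digit]
    · rw [Nat.digits_def' hp hm]
      simp [digit]
  | succ k ih =>
    rcases Nat.eq_zero_or_pos m with rfl | hm
    · simp [digit]
    · rw [Nat.digits_def' hp hm]
      simp only [List.getD_cons_succ, ih, digit_div]

end S5
namespace S5

variable {p : ℕ}

lemma ofDigits_zero_of_all_zero {l : List ℕ} (h : ∀ a ∈ l, a = 0) :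
    Nat.ofDigits p l = 0 := by
  induction l with
  | nil => simp
  | cons a t ih =>
    rw [Nat.ofDigits_cons, h a List.mem_cons_self, ih fun x hx => h x (List.mem_cons_of_mem _ hx)]
    simp

lemma ofDigits_tail {w : List ℕ} (hw : ∀ a ∈ w, a < p) :
    Nat.ofDigits p w.tail = (Nat.ofDigits p w : ℕ) / p := by
  cases w with
  | nil => simp
  | cons a t =>
    have ha : a < p := hw a List.mem_cons_self
    have hp : 0 < p := by omega
    rw [Nat.ofDigits_cons, List.tail_cons]
    push_cast
    rw [Nat.add_mul_div_left _ _ hp, Nat.div_eq_of_lt ha]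
    omega

lemma ofDigits_lt (hp : 1 < p) {w : List ℕ} (hw : ∀ a ∈ w, a < p) :
    (Nat.ofDigits p w : ℕ) < p ^ w.length :=
  Nat.ofDigits_lt_base_pow_length hp hw

lemma ofDigits_dropLast (hp : 1 < p) {w : List ℕ} (hw : ∀ a ∈ w, a < p) :
    (Nat.ofDigits p w.dropLast : ℕ) = (Nat.ofDigits p w : ℕ) % p ^ (w.length - 1) := by
  rcases eq_or_ne w [] with rfl | hne
  · simp
  · conv_rhs => rw [← List.dropLast_append_getLast hne]
    rw [Nat.ofDigits_append, List.length_dropLast]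
    have hl1 : (w.dropLast ++ [w.getLast hne]).length - 1 = w.length - 1 := by simp
    rw [hl1]
    have hlt : (Nat.ofDigits p w.dropLast : ℕ) < p ^ (w.length - 1) := by
      have := ofDigits_lt hp (fun a ha => hw a (List.mem_of_mem_dropLast ha))
      simpa [List.length_dropLast] using this
    rw [Nat.add_mul_mod_self_left, Nat.mod_eq_of_lt hlt]

lemma ofDigits_leftT (hp : 1 < p) {w : List ℕ} (hw : ∀ a ∈ w, a < p) :
    (Nat.ofDigits p (leftT w) : ℕ) = (Nat.ofDigits p w : ℕ) % p ^ (w.length - 1) := by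
  rw [← ofDigits_dropLast hp hw]
  unfold leftT
  set t := w.dropLast with ht
  have hsplit : t.reverse = t.reverse.takeWhile (· = 0) ++ t.reverse.dropWhile (· = 0) :=
    List.takeWhile_append_dropWhile.symm
  have : t = (t.reverse.dropWhile (· = 0)).reverse ++ (t.reverse.takeWhile (· = 0)).reverse := by
    conv_lhs => rw [← List.reverse_reverse t]
    conv_lhs => rw [hsplit]
    rw [List.reverse_append]
  conv_rhs => rw [this]
  rw [Nat.ofDigits_append]
  have hz : Nat.ofDigits p ((t.reverse.takeWhile (· = 0)).reverse) = 0 := by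
    apply ofDigits_zero_of_all_zero
    intro a ha
    rw [List.mem_reverse] at ha
    have := List.mem_takeWhile_imp ha
    simpa using this
  rw [hz]
  simp

end S5
namespace S5

variable {p : ℕ}

/-- occurrence predicate -/
def Occ (p : ℕ) (w : List ℕ) (n i : ℕ) : Prop :=
  ∀ k < w.length, digit p n (i + k) = w.getD k 0

lemma wordCount_eq (p : ℕ) (w : List ℕ) (n : ℕ) :
    wordCount p w n = Set.ncard {i | Occ p w n i} := rfl

lemma occ_succ_iff {w : List ℕ} {n i : ℕ} : Occ p w n (i + 1) ↔ Occ p w (n / p) i := by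
  unfold Occ
  refine forall₂_congr fun k _ => ?_
  rw [digit_div]
  constructor <;> intro h <;> [skip; skip] <;>
    · rw [show i + 1 + k = i + k + 1 by omega] at * <;> exact h

lemma occ_div_pow_iff {w : List ℕ} {n i : ℕ} : Occ p w n i ↔ Occ p w (n / p ^ i) 0 := by
  unfold Occ
  refine forall₂_congr fun k _ => ?_
  rw [digit_div_pow, Nat.zero_add]

lemma ofDigits_of_occ_zero (hp : 1 < p) {w : List ℕ} {n : ℕ} (h : Occ p w n 0) :
    (Nat.ofDigits p w : ℕ) = n % p ^ w.length := by
  induction w generalizing n with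
  | nil => simp [Nat.mod_one]
  | cons a t ih =>
    have h0 : digit p n 0 = a := by simpa using h 0 (by simp)
    have ht : Occ p t (n / p) 0 := by
      intro k hk
      have := h (k + 1) (by simpa using Nat.succ_lt_succ hk)
      rw [Nat.zero_add] at this ⊢
      rw [digit_div]
      simpa using this
    rw [Nat.ofDigits_cons, ih ht]
    have hp0 : 0 < p := by omega
    rw [List.length_cons, mod_pow_succ hp0]
    have : n % p = a := by simpa [digit] using h0
    push_cast
    omega

/-- the occurrence set is finite for admissible words -/
lemma occ_finite (hp : 1 < p) {w : List ℕ} (hw : Wt p w) (n : ℕ) :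
    {i | Occ p w n i}.Finite := by
  apply Set.Finite.subset (Set.finite_Iic n)
  intro i hi
  have hlen : w.length - 1 < w.length := by
    have : w.length ≠ 0 := by simpa [List.length_eq_zero_iff] using hw.1
    omega
  have hd : digit p n (i + (w.length - 1)) ≠ 0 := by
    rw [hi (w.length - 1) hlen]
    exact hw.2.2
  have h1 : p ^ (i + (w.length - 1)) ≤ n := pow_le_of_digit_ne hp hd
  have h2 : p ^ i ≤ p ^ (i + (w.length - 1)) := Nat.pow_le_pow_right (by omega) (by omega)
  have h3 : i < p ^ i := Nat.lt_pow_self hp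
  simp only [Set.mem_Iic]
  omega

open Classical in
/-- indicator of an occurrence at position 0 -/
noncomputable def occ0 (p : ℕ) (w : List ℕ) (n : ℕ) : ℕ := if Occ p w n 0 then 1 else 0

open Classical in
lemma occ0_pos {w : List ℕ} {n : ℕ} (h : Occ p w n 0) : occ0 p w n = 1 := by
  rw [occ0, if_pos h]

open Classical in
lemma occ0_zero {w : List ℕ} {n : ℕ} (h : ¬ Occ p w n 0) : occ0 p w n = 0 := by
  rw [occ0, if_neg h]

lemma wordCount_div (hp : 1 < p) {w : List ℕ} (hw : Wt p w) (n : ℕ) :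
    wordCount p w n = wordCount p w (n / p) + occ0 p w n := by
  classical
  have hS' : {i | Occ p w (n / p) i}.Finite := occ_finite hp hw (n / p)
  have hT : ((· + 1) '' {i | Occ p w (n / p) i}).Finite := hS'.image _
  have hTcard : ((· + 1) '' {i | Occ p w (n / p) i}).ncard = wordCount p w (n / p) := by
    rw [wordCount_eq, Set.ncard_image_of_injective _ (add_left_injective 1)]
  have h0T : (0 : ℕ) ∉ (· + 1) '' {i | Occ p w (n / p) i} := by
    rintro ⟨j, -, hj⟩
    simp at hj
  by_cases h0 : Occ p w n 0
  · have hset : {i | Occ p w n i} = insert 0 ((· + 1) '' {i | Occ p w (n / p) i}) := by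
      ext i
      cases i with
      | zero => simp [h0]
      | succ j =>
        simp only [Set.mem_setOf_eq, Set.mem_insert_iff, Set.mem_image]
        rw [occ_succ_iff]
        constructor
        · intro h; exact Or.inr ⟨j, h, rfl⟩
        · rintro (h | ⟨k, hk, hkj⟩)
          · omega
          · have : k = j := by omega
            subst this; exact hk
    rw [wordCount_eq, hset, Set.ncard_insert_of_notMem h0T hT, hTcard, occ0_pos h0]
  · have hset : {i | Occ p w n i} = (· + 1) '' {i | Occ p w (n / p) i} := by
      ext i
      cases i with
      | zero => simp [h0, h0T]
      | succ j =>
        simp only [Set.mem_setOf_eq, Set.mem_image]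
        rw [occ_succ_iff]
        constructor
        · intro h; exact ⟨j, h, rfl⟩
        · rintro ⟨k, hk, hkj⟩
          have : k = j := by omega
          subst this; exact hk
    rw [wordCount_eq, hset, hTcard, occ0_zero h0, Nat.add_zero]

lemma wordCount_ne_zero_of_occ_zero (hp : 1 < p) {w : List ℕ} (hw : Wt p w) {n : ℕ}
    (h : Occ p w n 0) : wordCount p w n ≠ 0 := by
  rw [wordCount_eq]
  have hfin := occ_finite hp hw n
  have hpos := (Set.ncard_pos hfin).mpr ⟨0, h⟩
  omega

lemma wordCount_ne_zero_div (hp : 1 < p) {w : List ℕ} (hw : Wt p w) {n : ℕ}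
    (h : wordCount p w (n / p) ≠ 0) : wordCount p w n ≠ 0 := by
  rw [wordCount_div hp hw n]
  omega

end S5
namespace S5

variable {p : ℕ}

/-- `T̄` as a function of the integer -/
noncomputable def TbN (p m : ℕ) : RatFunc ℚ :=
  algebraMap (Polynomial ℚ) (RatFunc ℚ) ((Tpoly p m).map (Int.castRingHom ℚ)) /
    (theta p 0 m : RatFunc ℚ)

lemma TbarR_eq_TbN (p : ℕ) (v : List ℕ) : TbarR p v = TbN p (Nat.ofDigits p v) := rfl

lemma theta_zero_pos (p n : ℕ) : 0 < theta p 0 n := by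
  rw [theta]
  apply Finset.card_pos.mpr
  refine ⟨0, Finset.mem_filter.mpr ⟨Finset.mem_range.mpr (by omega), ?_⟩⟩
  rw [Nat.choose_zero_right, padicValNat.one]

lemma Tpoly_ne_zero (p n : ℕ) : Tpoly p n ≠ 0 := by
  intro h
  have := congrArg (Polynomial.eval (1 : ℤ)) h
  rw [Tpoly] at this
  simp [Polynomial.eval_finset_sum] at this
  omega

lemma TbN_ne_zero (p n : ℕ) : TbN p n ≠ 0 := by
  rw [TbN]
  apply div_ne_zero
  · apply RatFunc.algebraMap_ne_zero
    rw [Ne, Polynomial.map_eq_zero_iff (f := Int.castRingHom ℚ) Int.cast_injective]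
    exact Tpoly_ne_zero p n
  · have hθ : ((theta p 0 n : ℕ) : RatFunc ℚ) =
        algebraMap (Polynomial ℚ) (RatFunc ℚ) ((theta p 0 n : ℕ) : Polynomial ℚ) :=
      (map_natCast _ _).symm
    rw [hθ]
    apply RatFunc.algebraMap_ne_zero
    have := theta_zero_pos p n
    exact Nat.cast_ne_zero.mpr (by omega)

lemma TbN_zero_eq_one : TbN p 0 = 1 := by
  rw [TbN]
  have h1 : Tpoly p 0 = 1 := by
    rw [Tpoly]
    simp [padicValNat.one]
  have h2 : theta p 0 0 = 1 := by
    rw [theta, Finset.range_one, Finset.filter_singleton,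
      if_pos (by rw [Nat.choose_self, padicValNat.one]), Finset.card_singleton]
  rw [h1, h2]
  simp

/-- the elementary factor in the telescoping product -/
noncomputable def qf (p n μ : ℕ) : RatFunc ℚ :=
  TbN p (n % p ^ (μ + 1)) * TbN p (n / p % p ^ (μ - 1)) /
    (TbN p (n / p % p ^ μ) * TbN p (n % p ^ μ))

lemma qf_eq_one (hp : 1 < p) {n μ : ℕ} (hd : digit p n μ = 0) : qf p n μ = 1 := by
  have hp0 : 0 < p := by omega
  have hA : n % p ^ (μ + 1) = n % p ^ μ := by
    rw [mod_pow_succ_digit hp0, hd]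
    simp
  have hB : n / p % p ^ μ = n / p % p ^ (μ - 1) := by
    cases μ with
    | zero => rfl
    | succ μ' =>
      have hd' : digit p (n / p) μ' = 0 := by rw [digit_div]; exact hd
      rw [mod_pow_succ_digit hp0, hd']
      simp
  rw [qf, hA, hB]
  rw [mul_comm (TbN p (n % p ^ μ))]
  exact div_self (mul_ne_zero (TbN_ne_zero _ _) (TbN_ne_zero _ _))

lemma qf_telescope (hp : 1 < p) (n : ℕ) :
    ∀ m : ℕ, ∏ μ ∈ Finset.range m, qf p n μ =
      TbN p (n % p ^ m) / TbN p (n / p % p ^ (m - 1)) := by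
  intro m
  induction m with
  | zero =>
    simp [pow_zero, Nat.mod_one, TbN_zero_eq_one]
  | succ m ih =>
    rw [Finset.prod_range_succ, ih, qf]
    have h1 : m + 1 - 1 = m := rfl
    rw [h1]
    have h2 := TbN_ne_zero p (n % p ^ m)
    have h3 := TbN_ne_zero p (n / p % p ^ (m - 1))
    have h4 := TbN_ne_zero p (n / p % p ^ m)
    field_simp

end S5
namespace S5

variable {p : ℕ}

lemma getD_last_eq_getLast {l : List ℕ} (h : l ≠ []) :
    l.getD (l.length - 1) 0 = l.getLast h := by
  rw [List.getLast_eq_getElem, List.getD_eq_getElem l 0]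

lemma wt_digits (hp : 1 < p) {m : ℕ} (hm : m ≠ 0) : Wt p (Nat.digits p m) := by
  have hne : Nat.digits p m ≠ [] := Nat.digits_ne_nil_iff_ne_zero.mpr hm
  refine ⟨hne, fun a ha => Nat.digits_lt_base hp ha, ?_⟩
  rw [getD_last_eq_getLast hne]
  exact Nat.getLast_digit_ne_zero p hm

lemma digits_of_wt (hp : 1 < p) {w : List ℕ} (hw : Wt p w) :
    Nat.digits p (Nat.ofDigits p w) = w := by
  refine Nat.digits_ofDigits p hp w hw.2.1 fun h => ?_
  rw [← getD_last_eq_getLast h]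
  exact hw.2.2

lemma mem_bound (hp : 1 < p) {w : List ℕ} {n : ℕ} (hw : Wt p w)
    (h : wordCount p w n ≠ 0) :
    w ∈ (Finset.range (n + 1)).image (Nat.digits p) := by
  rw [wordCount_eq] at h
  obtain ⟨i, hi⟩ := Set.nonempty_of_ncard_ne_zero h
  have hocc : Occ p w (n / p ^ i) 0 := occ_div_pow_iff.mp hi
  have hofd : (Nat.ofDigits p w : ℕ) = (n / p ^ i) % p ^ w.length :=
    ofDigits_of_occ_zero hp hocc
  have hle : (Nat.ofDigits p w : ℕ) ≤ n := by
    rw [hofd]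
    exact le_trans (Nat.mod_le _ _) (Nat.div_le_self _ _)
  exact Finset.mem_image.mpr ⟨Nat.ofDigits p w, Finset.mem_range.mpr (by omega),
    digits_of_wt hp hw⟩

lemma len_digits_mod (hp : 1 < p) {n μ : ℕ} (hd : digit p n μ ≠ 0) :
    (Nat.digits p (n % p ^ (μ + 1))).length = μ + 1 := by
  have hp0 : 0 < p := by omega
  set m := n % p ^ (μ + 1) with hm
  have hdm : digit p m μ ≠ 0 := by
    rw [hm, digit_mod_pow_lt hp0 _ _ _ (Nat.lt_succ_self μ)]
    exact hd
  have hm0 : m ≠ 0 := by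
    intro h
    rw [h, digit_zero] at hdm
    exact hdm rfl
  have hlow : p ^ μ ≤ m := pow_le_of_digit_ne hp hdm
  have hhigh : m < p ^ (μ + 1) := Nat.mod_lt _ (Nat.pow_pos hp0)
  have h1 : m < p ^ (Nat.digits p m).length := Nat.lt_base_pow_length_digits hp
  have h2 : p ^ (Nat.digits p m).length ≤ p * m := Nat.base_pow_length_digits_le p m hp hm0
  have hlt1 : μ < (Nat.digits p m).length := by
    have := lt_of_le_of_lt hlow h1
    exact (Nat.pow_lt_pow_iff_right hp).mp this
  have hlt2 : (Nat.digits p m).length < μ + 2 := by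
    have : p ^ (Nat.digits p m).length < p ^ (μ + 2) := by
      calc p ^ (Nat.digits p m).length ≤ p * m := h2
        _ < p * p ^ (μ + 1) := (Nat.mul_lt_mul_left hp0).mpr hhigh
        _ = p ^ (μ + 2) := by ring
    exact (Nat.pow_lt_pow_iff_right hp).mp this
  omega

lemma occ_digits_mod (hp : 1 < p) {n μ : ℕ} (hd : digit p n μ ≠ 0) :
    Occ p (Nat.digits p (n % p ^ (μ + 1))) n 0 := by
  have hp0 : 0 < p := by omega
  intro k hk
  rw [len_digits_mod hp hd] at hk
  rw [digits_getD hp, digit_mod_pow_lt hp0 _ _ _ hk, Nat.zero_add]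

lemma rFun_digits_mod (hp : 1 < p) {n μ : ℕ} (hd : digit p n μ ≠ 0) :
    rFun p (Nat.digits p (n % p ^ (μ + 1))) = qf p n μ := by
  have hp0 : 0 < p := by omega
  set m := n % p ^ (μ + 1) with hm
  set w := Nat.digits p m with hwdef
  have hlen : w.length = μ + 1 := len_digits_mod hp hd
  have hlt : ∀ a ∈ w, a < p := fun a ha => Nat.digits_lt_base hp ha
  have hlt' : ∀ a ∈ w.tail, a < p := fun a ha => hlt a (List.mem_of_mem_tail ha)
  have hofd : (Nat.ofDigits p w : ℕ) = m := Nat.ofDigits_digits p m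
  have htail_len : w.tail.length = μ := by rw [List.length_tail, hlen]; omega
  have h_r : (Nat.ofDigits p (rightT w) : ℕ) = n / p % p ^ μ := by
    show (Nat.ofDigits p w.tail : ℕ) = _
    rw [ofDigits_tail hlt, hofd, hm, mod_pow_div hp0]
  have h_l : (Nat.ofDigits p (leftT w) : ℕ) = n % p ^ μ := by
    rw [ofDigits_leftT hp hlt, hofd, hlen, Nat.succ_sub_one, hm,
      Nat.mod_mod_of_dvd _ (pow_dvd_pow p (Nat.le_succ μ))]
  have h_lr : (Nat.ofDigits p (lrT w) : ℕ) = n / p % p ^ (μ - 1) := by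
    show (Nat.ofDigits p (leftT w.tail) : ℕ) = _
    rw [ofDigits_leftT hp hlt', ofDigits_tail hlt, hofd, htail_len, hm, mod_pow_div hp0,
      Nat.mod_mod_of_dvd _ (pow_dvd_pow p (Nat.sub_le μ 1))]
  rw [rFun, TbarR_eq_TbN, TbarR_eq_TbN, TbarR_eq_TbN, TbarR_eq_TbN,
    hofd, h_r, h_l, h_lr, qf]

end S5
namespace S5

variable {p : ℕ}

/-- the full product as a function of `n` -/
noncomputable def Fp (p n : ℕ) : RatFunc ℚ :=
  ∏ᶠ w : {w : List ℕ // Wt p w}, rFun p w.1 ^ wordCount p w.1 n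

open Classical in
/-- a finite set of words containing all words occurring in `n` -/
noncomputable def wordFinset (p n : ℕ) : Finset {w : List ℕ // Wt p w} :=
  ((Finset.range (n + 1)).image (Nat.digits p)).subtype (Wt p)

open Classical in
lemma mem_wordFinset {n : ℕ} {w : {w : List ℕ // Wt p w}} :
    w ∈ wordFinset p n ↔ w.1 ∈ (Finset.range (n + 1)).image (Nat.digits p) := by
  rw [wordFinset, Finset.mem_subtype]

lemma mem_wordFinset_of_count (hp : 1 < p) {n : ℕ} {w : {w : List ℕ // Wt p w}}
    (h : wordCount p w.1 n ≠ 0) : w ∈ wordFinset p n :=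
  mem_wordFinset.mpr (mem_bound hp w.2 h)

lemma prod_occ0 (hp : 1 < p) (n : ℕ) :
    ∏ w ∈ wordFinset p n, rFun p w.1 ^ occ0 p w.1 n = TbN p n / TbN p (n / p) := by
  classical
  have hp0 : 0 < p := by omega
  set L := (Nat.digits p n).length with hL
  set M : Finset ℕ := (Finset.range L).filter (fun μ => digit p n μ ≠ 0) with hM
  have h1 : ∏ w ∈ (wordFinset p n).filter (fun w => Occ p w.1 n 0), rFun p w.1 =
      ∏ w ∈ wordFinset p n, rFun p w.1 ^ occ0 p w.1 n := by
    rw [Finset.prod_filter]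
    refine Finset.prod_congr rfl fun w _ => ?_
    by_cases h : Occ p w.1 n 0
    · rw [if_pos h, occ0_pos h, pow_one]
    · rw [if_neg h, occ0_zero h, pow_zero]
  have hne0 : ∀ μ, digit p n μ ≠ 0 → n % p ^ (μ + 1) ≠ 0 := by
    intro μ hd hzero
    have hl := len_digits_mod hp hd
    rw [hzero] at hl
    simp at hl
  have h2 : ∏ μ ∈ M, rFun p (Nat.digits p (n % p ^ (μ + 1))) =
      ∏ w ∈ (wordFinset p n).filter (fun w => Occ p w.1 n 0), rFun p w.1 := by
    refine Finset.prod_bij (fun μ hμ => (⟨Nat.digits p (n % p ^ (μ + 1)),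
        wt_digits hp (hne0 μ (Finset.mem_filter.mp hμ).2)⟩ : {w : List ℕ // Wt p w}))
      ?_ ?_ ?_ ?_
    · intro μ hμ
      have hd : digit p n μ ≠ 0 := (Finset.mem_filter.mp hμ).2
      refine Finset.mem_filter.mpr ⟨?_, occ_digits_mod hp hd⟩
      exact mem_wordFinset_of_count hp
        (wordCount_ne_zero_of_occ_zero hp (wt_digits hp (hne0 μ hd)) (occ_digits_mod hp hd))
    · intro μ1 h1' μ2 h2' heq
      have hd1 : digit p n μ1 ≠ 0 := (Finset.mem_filter.mp h1').2
      have hd2 : digit p n μ2 ≠ 0 := (Finset.mem_filter.mp h2').2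
      have hl : Nat.digits p (n % p ^ (μ1 + 1)) = Nat.digits p (n % p ^ (μ2 + 1)) :=
        congrArg Subtype.val heq
      have hll := congrArg List.length hl
      rw [len_digits_mod hp hd1, len_digits_mod hp hd2] at hll
      omega
    · rintro ⟨w, hw⟩ hb
      obtain ⟨-, hocc'⟩ := Finset.mem_filter.mp hb
      have hocc : Occ p w n 0 := hocc'
      have hne : w.length ≠ 0 := by simpa [List.length_eq_zero_iff] using hw.1
      set μ := w.length - 1 with hμdef
      have hd : digit p n μ ≠ 0 := by
        have hx := hocc μ (by omega)
        rw [Nat.zero_add] at hx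
        rw [hx]
        exact hw.2.2
      have hmem : μ ∈ M := by
        refine Finset.mem_filter.mpr ⟨Finset.mem_range.mpr ?_, hd⟩
        have hl : p ^ μ ≤ n := pow_le_of_digit_ne hp hd
        have hh : n < p ^ L := Nat.lt_base_pow_length_digits hp
        exact (Nat.pow_lt_pow_iff_right hp).mp (lt_of_le_of_lt hl hh)
      refine ⟨μ, hmem, ?_⟩
      apply Subtype.ext
      show Nat.digits p (n % p ^ (μ + 1)) = w
      have hofd : (Nat.ofDigits p w : ℕ) = n % p ^ w.length := ofDigits_of_occ_zero hp hocc
      have hlen : μ + 1 = w.length := by omega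
      rw [hlen, ← hofd, digits_of_wt hp hw]
    · intro μ hμ
      rfl
  have h3 : ∏ μ ∈ M, rFun p (Nat.digits p (n % p ^ (μ + 1))) = ∏ μ ∈ M, qf p n μ := by
    refine Finset.prod_congr rfl fun μ hμ => rFun_digits_mod hp (Finset.mem_filter.mp hμ).2
  have h4 : ∏ μ ∈ M, qf p n μ = ∏ μ ∈ Finset.range L, qf p n μ := by
    refine Finset.prod_filter_of_ne fun μ _ hq => ?_
    intro hd
    exact hq (qf_eq_one hp hd)
  have h5 : n % p ^ L = n := Nat.mod_eq_of_lt (Nat.lt_base_pow_length_digits hp)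
  have h6 : n / p % p ^ (L - 1) = n / p := by
    apply Nat.mod_eq_of_lt
    rcases Nat.eq_zero_or_pos n with rfl | hn
    · simp only [Nat.zero_div, Nat.zero_mod]
      exact Nat.pow_pos hp0
    · have hdig : Nat.digits p n = n % p :: Nat.digits p (n / p) := Nat.digits_def' hp hn
      have : L = (Nat.digits p (n / p)).length + 1 := by rw [hL, hdig, List.length_cons]
      rw [this, Nat.succ_sub_one]
      exact Nat.lt_base_pow_length_digits hp
  rw [← h1, ← h2, h3, h4, qf_telescope hp n L, h5, h6]

lemma F_step (hp : 1 < p) (n : ℕ) :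
    Fp p n = Fp p (n / p) * (TbN p n / TbN p (n / p)) := by
  classical
  have hsub1 : (Function.mulSupport fun w : {w : List ℕ // Wt p w} =>
      rFun p w.1 ^ wordCount p w.1 n) ⊆ ↑(wordFinset p n) := by
    intro w hw
    rw [Function.mem_mulSupport] at hw
    refine Finset.mem_coe.mpr (mem_wordFinset_of_count hp fun h => ?_)
    rw [h, pow_zero] at hw
    exact hw rfl
  have hsub2 : (Function.mulSupport fun w : {w : List ℕ // Wt p w} =>
      rFun p w.1 ^ wordCount p w.1 (n / p)) ⊆ ↑(wordFinset p n) := by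
    intro w hw
    rw [Function.mem_mulSupport] at hw
    refine Finset.mem_coe.mpr (mem_wordFinset_of_count hp (wordCount_ne_zero_div hp w.2 fun h => ?_))
    rw [h, pow_zero] at hw
    exact hw rfl
  rw [Fp, finprod_eq_prod_of_mulSupport_subset _ hsub1, Fp,
    finprod_eq_prod_of_mulSupport_subset _ hsub2, ← prod_occ0 hp n, ← Finset.prod_mul_distrib]
  refine Finset.prod_congr rfl fun w _ => ?_
  rw [← pow_add, ← wordCount_div hp w.2 n]

lemma wordCount_zero (hp : 1 < p) {w : List ℕ} (hw : Wt p w) : wordCount p w 0 = 0 := by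
  rw [wordCount_eq]
  convert Set.ncard_empty ℕ
  rw [Set.eq_empty_iff_forall_notMem]
  intro i hi
  have hne : w.length ≠ 0 := by simpa [List.length_eq_zero_iff] using hw.1
  have := hi (w.length - 1) (by omega)
  rw [digit_zero] at this
  exact hw.2.2 this.symm

lemma F_eq_TbN (hp : 1 < p) (n : ℕ) : Fp p n = TbN p n := by
  induction n using Nat.strong_induction_on with
  | _ n ih =>
    rcases Nat.eq_zero_or_pos n with rfl | hn
    · rw [TbN_zero_eq_one, Fp]
      have h : ∀ w : {w : List ℕ // Wt p w}, rFun p w.1 ^ wordCount p w.1 0 = 1 := by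
        intro w
        rw [wordCount_zero hp w.2, pow_zero]
      rw [finprod_congr h]
      exact finprod_one
    · have hdiv : n / p < n := Nat.div_lt_self hn hp
      rw [F_step hp n, ih _ hdiv, mul_comm, div_mul_cancel₀ _ (TbN_ne_zero p (n / p))]

end S5
/-- the telescoping product `T̄_v = ∏_{w ∈ W̃} r_w^{|v|_w}`
(identity of rational functions; the product has finite support). -/
theorem stmt5 (p : ℕ) (hp : p.Prime) (v : List ℕ) (hv : v = [] ∨ Wt p v) :
    TbarR p v =
      ∏ᶠ w : {w : List ℕ // Wt p w}, rFun p w.1 ^ wordCount p w.1 (Nat.ofDigits p v) := by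
  rw [S5.TbarR_eq_TbN]
  exact (S5.F_eq_TbN hp.one_lt (Nat.ofDigits p v)).symm
end

section
/- Let p be a prime, let n be a nonnegative integer and μ ≥ 1 an integer with n < p^μ, and let n = Σ_{i=0}^{μ−1} n_i p^i with digits 0 ≤ n_i < p. Then θ_p(1,n) = Σ_{i=0}^{μ−2} (n_{μ−1}+1)⋯(n_{i+2}+1) · n_{i+1} · (p−n_i−1) · (n_{i−1}+1)⋯(n_0+1), where the products over an empty index range are 1. Consequently θ_p(1,n)/θ_p(0,n) = Σ_{c=1}^{p−1} Σ_{a=0}^{p−2} (c/(c+1))·((p−a−1)/(a+1))·|n|_{ca}, where ca denotes the two-letter word with leftmost letter c and rightmost letter a. -/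
open Finset

variable {p : ℕ}

lemma digit_lt (hp : 2 ≤ p) (n i : ℕ) : digit p n i < p := Nat.mod_lt _ (by omega)

lemma digit_eq_zero_of_lt {n i : ℕ} (h : n < p ^ i) : digit p n i = 0 := by
  unfold digit; rw [Nat.div_eq_of_lt h]; rfl

lemma digit_div_pow (n m l : ℕ) : digit p (n / p ^ m) l = digit p n (m + l) := by
  unfold digit; rw [Nat.div_div_eq_div_mul, ← pow_add]

lemma digit_div (n l : ℕ) : digit p (n / p) l = digit p n (l + 1) := by
  have := digit_div_pow (p := p) n 1 l; rw [pow_one] at this; rw [this, Nat.add_comm]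

lemma digit_mod_pow (hp : 2 ≤ p) (n m l : ℕ) :
    digit p (n % p ^ m) l = if l < m then digit p n l else 0 := by
  split
  · next h =>
    unfold digit
    have h1 : p ^ m = p ^ l * p ^ (m - l) := by rw [← pow_add]; congr 1; omega
    rw [h1, Nat.mod_mul_right_div_self,
      Nat.mod_mod_of_dvd _ (dvd_pow_self p (by omega : m - l ≠ 0))]
  · next h =>
    exact digit_eq_zero_of_lt (lt_of_lt_of_le
      (Nat.mod_lt _ (by positivity))
      (Nat.pow_le_pow_right (by omega) (by omega)))

lemma digit_zero_def (n : ℕ) : digit p n 0 = n % p := by unfold digit; rw [pow_zero, Nat.div_one]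

/-- digitwise ≤ implies ≤ -/
lemma le_of_digit_le (hp : 2 ≤ p) {a b : ℕ} (h : ∀ l, digit p a l ≤ digit p b l) : a ≤ b := by
  induction a using Nat.strong_induction_on generalizing b with
  | _ a ih =>
    rcases Nat.eq_zero_or_pos a with rfl | ha
    · exact Nat.zero_le b
    · have hdiv : a / p ≤ b / p := by
        refine ih (a / p) (Nat.div_lt_self ha (by omega)) fun l => ?_
        rw [digit_div, digit_div]; exact h (l + 1)
      have h0 : a % p ≤ b % p := by
        have := h 0; rwa [digit_zero_def, digit_zero_def] at this
      calc a = p * (a / p) + a % p := (Nat.div_add_mod a p).symm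
        _ ≤ p * (b / p) + b % p := by
            exact Nat.add_le_add (Nat.mul_le_mul_left p hdiv) h0
        _ = b := Nat.div_add_mod b p

/-- strict at position m, ≤ above: gives < -/
lemma lt_of_digit_lt (hp : 2 ≤ p) {a b : ℕ} (m : ℕ) (h0 : digit p a m < digit p b m)
    (hrest : ∀ l, m < l → digit p a l ≤ digit p b l) : a < b := by
  have key : a / p ^ m < b / p ^ m := by
    have hdiv : a / p ^ m / p ≤ b / p ^ m / p := by
      refine le_of_digit_le hp fun l => ?_
      rw [digit_div, digit_div, digit_div_pow, digit_div_pow]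
      exact hrest _ (by omega)
    have hm : a / p ^ m % p < b / p ^ m % p := h0
    calc a / p ^ m = p * (a / p ^ m / p) + a / p ^ m % p := (Nat.div_add_mod _ p).symm
      _ < p * (b / p ^ m / p) + b / p ^ m % p :=
          Nat.add_lt_add_of_le_of_lt (Nat.mul_le_mul_left p hdiv) hm
      _ = b / p ^ m := Nat.div_add_mod _ p
  by_contra hc
  exact absurd (Nat.div_le_div_right (le_of_not_gt hc)) (Nat.not_le.mpr key)

/-- mod split at position l -/
lemma mod_pow_succ_eq (n l : ℕ) : n % p ^ (l + 1) = digit p n l * p ^ l + n % p ^ l := by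
  have h1 : p ^ (l + 1) = p ^ l * p := pow_succ p l
  rw [h1]
  conv_lhs => rw [Nat.mod_mul]
  unfold digit
  ring

lemma mod_lt_of_digit_lt (hp : 2 ≤ p) {a b : ℕ} (l : ℕ) (h : digit p a l < digit p b l) :
    a % p ^ (l + 1) < b % p ^ (l + 1) := by
  rw [mod_pow_succ_eq, mod_pow_succ_eq]
  have h1 : a % p ^ l < p ^ l := Nat.mod_lt _ (by positivity)
  calc digit p a l * p ^ l + a % p ^ l < (digit p a l + 1) * p ^ l := by rw [add_mul]; omega
    _ ≤ digit p b l * p ^ l := Nat.mul_le_mul_right _ (by omega)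
    _ ≤ _ := Nat.le_add_right _ _

lemma mod_lt_iff_of_digit_eq {a b : ℕ} (l : ℕ) (h : digit p a l = digit p b l) :
    (b % p ^ (l + 1) < a % p ^ (l + 1) ↔ b % p ^ l < a % p ^ l) := by
  rw [mod_pow_succ_eq, mod_pow_succ_eq, h]; omega

lemma carry_iff_borrow {m t n : ℕ} (hm : 0 < m) (ht : t ≤ n) :
    m ≤ t % m + (n - t) % m ↔ n % m < t % m := by
  set s := t % m + (n - t) % m with hs
  have key : s % m = n % m := by
    rw [hs, ← Nat.add_mod, Nat.add_sub_cancel' ht]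
  have h1 : t % m < m := Nat.mod_lt _ hm
  have h2 : (n - t) % m < m := Nat.mod_lt _ hm
  have h3 : n % m < m := Nat.mod_lt _ hm
  have hq : s / m < 2 := (Nat.div_lt_iff_lt_mul hm).mpr (by omega)
  have hd := Nat.div_add_mod s m
  -- s = m * (s/m) + n%m, s/m ∈ {0,1}
  interval_cases h : s / m <;> omega

/-- the set of borrow positions -/
def Bset (p μ n t : ℕ) : Finset ℕ := (range μ).filter fun l => n % p ^ (l+1) < t % p ^ (l+1)

lemma kummer (hp : p.Prime) {n t μ : ℕ} (ht : t ≤ n) (hn : n < p ^ μ) :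
    padicValNat p (n.choose t) = (Bset p μ n t).card := by
  haveI : Fact p.Prime := ⟨hp⟩
  have hlog : Nat.log p n < μ + 1 := by
    rcases Nat.eq_zero_or_pos n with rfl | hn0
    · simp
    · exact lt_trans (Nat.log_lt_of_lt_pow (by omega) hn) (Nat.lt_succ_self μ)
  rw [padicValNat_choose ht hlog]
  unfold Bset
  rw [Finset.card_filter, Finset.card_filter, Finset.sum_Ico_eq_sum_range]
  apply Finset.sum_congr (by norm_num)
  intro l _
  congr 1
  rw [eq_iff_iff, carry_iff_borrow (pow_pos (hp.pos) _) ht]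
  constructor <;> intro h <;> convert h using 3 <;> omega

/-- counting digit-constrained numbers -/
lemma card_digit_filter (hp : 2 ≤ p) (μ : ℕ) (A : ℕ → Finset ℕ) (hA : ∀ l, A l ⊆ range p) :
    ((range (p ^ μ)).filter fun t => ∀ l < μ, digit p t l ∈ A l).card
      = ∏ l ∈ range μ, (A l).card := by
  induction μ generalizing A with
  | zero => simp
  | succ μ ih =>
    have key : ((range (p ^ (μ+1))).filter fun t => ∀ l < μ+1, digit p t l ∈ A l).card
        = (((range (p ^ μ)).filter fun u => ∀ l < μ, digit p u l ∈ A (l+1)) ×ˢ A 0).card := by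
      apply Finset.card_bij' (fun t _ => (t / p, t % p)) (fun q _ => p * q.1 + q.2)
      · intro t htm
        simp only [Finset.mem_filter, Finset.mem_range] at htm
        obtain ⟨h1, h2⟩ := htm
        simp only [Finset.mem_product, Finset.mem_filter, Finset.mem_range]
        refine ⟨⟨?_, fun l hl => ?_⟩, ?_⟩
        · rw [Nat.div_lt_iff_lt_mul (by omega)]
          calc t < p ^ (μ+1) := h1
            _ = p ^ μ * p := pow_succ p μ
        · rw [digit_div]; exact h2 (l+1) (by omega)
        · rw [← digit_zero_def]; exact h2 0 (by omega)
      · intro q hq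
        simp only [Finset.mem_product, Finset.mem_filter, Finset.mem_range] at hq
        obtain ⟨⟨h1, h2⟩, h3⟩ := hq
        have hr : q.2 < p := Finset.mem_range.mp (hA 0 h3)
        have hdiv : (p * q.1 + q.2) / p = q.1 := by
          rw [Nat.mul_add_div (by omega), Nat.div_eq_of_lt hr]; omega
        have hmod : (p * q.1 + q.2) % p = q.2 := by
          rw [Nat.mul_add_mod, Nat.mod_eq_of_lt hr]
        simp only [Finset.mem_filter, Finset.mem_range]
        constructor
        · calc p * q.1 + q.2 < p * q.1 + p := by omega
            _ = p * (q.1 + 1) := by ring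
            _ ≤ p * p ^ μ := Nat.mul_le_mul_left p (by omega)
            _ = p ^ (μ+1) := (pow_succ' p μ).symm
        · intro l hl
          cases l with
          | zero => rw [digit_zero_def, hmod]; exact h3
          | succ l => rw [← digit_div, hdiv]; exact h2 l (by omega)
      · intro t _; exact Nat.div_add_mod t p
      · intro q hq
        simp only [Finset.mem_product, Finset.mem_filter, Finset.mem_range] at hq
        have hr : q.2 < p := Finset.mem_range.mp (hA 0 hq.2)
        have hdiv : (p * q.1 + q.2) / p = q.1 := by
          rw [Nat.mul_add_div (by omega), Nat.div_eq_of_lt hr]; omega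
        have hmod : (p * q.1 + q.2) % p = q.2 := by
          rw [Nat.mul_add_mod, Nat.mod_eq_of_lt hr]
        rw [hdiv, hmod]
    rw [key, Finset.card_product, ih (fun l => A (l+1)) (fun l => hA (l+1)),
      Finset.prod_range_succ']

/-- digit constraint sets for a single borrow at position `i` -/
def Aset (p n i l : ℕ) : Finset ℕ :=
  if l = i then Ico (digit p n i + 1) p
  else if l = i + 1 then range (digit p n (i+1))
  else Iic (digit p n l)

lemma Aset_self (p n i : ℕ) : Aset p n i i = Ico (digit p n i + 1) p := if_pos rfl

lemma Aset_succ (p n i : ℕ) : Aset p n i (i+1) = range (digit p n (i+1)) := by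
  unfold Aset; rw [if_neg (by omega), if_pos rfl]

lemma Aset_other (p n i l : ℕ) (h1 : l ≠ i) (h2 : l ≠ i + 1) :
    Aset p n i l = Iic (digit p n l) := by
  unfold Aset; rw [if_neg h1, if_neg h2]

/-- no borrow up to l if digitwise ≤ up to l -/
lemma noborrow (hp : 2 ≤ p) {t n l : ℕ} (h : ∀ k ≤ l, digit p t k ≤ digit p n k) :
    t % p ^ (l+1) ≤ n % p ^ (l+1) := by
  apply le_of_digit_le hp
  intro k
  rw [digit_mod_pow hp, digit_mod_pow hp]
  split
  · exact h k (by omega)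
  · exact le_refl 0

lemma strictmod (hp : 2 ≤ p) {t n i : ℕ} (hlt : digit p t (i+1) < digit p n (i+1))
    (habove : ∀ k, i + 2 ≤ k → digit p t k ≤ digit p n k) {l : ℕ} (hl : i + 1 ≤ l) :
    t % p ^ (l+1) < n % p ^ (l+1) := by
  apply lt_of_digit_lt hp (i+1)
  · rw [digit_mod_pow hp, digit_mod_pow hp, if_pos (by omega), if_pos (by omega)]; exact hlt
  · intro k hk
    rw [digit_mod_pow hp, digit_mod_pow hp]
    split
    · exact habove k (by omega)
    · exact le_refl 0

lemma bwd (hp : 2 ≤ p) {n μ t i : ℕ} (hn : n < p ^ μ) (hiμ : i + 1 < μ) (ht : t < p ^ μ)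
    (hc : ∀ l < μ, digit p t l ∈ Aset p n i l) : t < n ∧ Bset p μ n t = {i} := by
  have hdi : digit p n i < digit p t i := by
    have := hc i (by omega); rw [Aset_self, Finset.mem_Ico] at this; omega
  have hdi1 : digit p t (i+1) < digit p n (i+1) := by
    have := hc (i+1) hiμ; rwa [Aset_succ, Finset.mem_range] at this
  have hlow : ∀ k < i, digit p t k ≤ digit p n k := by
    intro k hk
    have := hc k (by omega)
    rwa [Aset_other p n i k (by omega) (by omega), Finset.mem_Iic] at this
  have habove : ∀ k, i + 2 ≤ k → digit p t k ≤ digit p n k := by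
    intro k hk
    rcases lt_or_ge k μ with h | h
    · have := hc k h
      rwa [Aset_other p n i k (by omega) (by omega), Finset.mem_Iic] at this
    · rw [digit_eq_zero_of_lt (lt_of_lt_of_le ht (Nat.pow_le_pow_right (by omega) h))]
      exact Nat.zero_le _
  refine ⟨lt_of_digit_lt hp (i+1) hdi1 (fun l hl => habove l (by omega)), ?_⟩
  ext l
  simp only [Bset, Finset.mem_filter, Finset.mem_range, Finset.mem_singleton]
  constructor
  · rintro ⟨hlμ, hb⟩
    by_contra hne
    rcases lt_or_ge l i with h | h
    · exact absurd hb (not_lt.mpr (noborrow hp (fun k hk => hlow k (by omega))))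
    · have hl : i + 1 ≤ l := by omega
      exact absurd hb (not_lt.mpr (le_of_lt (strictmod hp hdi1 habove hl)))
  · rintro rfl
    exact ⟨by omega, mod_lt_of_digit_lt hp l hdi⟩

lemma fwd (hp : 2 ≤ p) {n μ t i : ℕ} (hn : n < p ^ μ) (ht : t ≤ n)
    (hB : Bset p μ n t = {i}) : i + 1 < μ ∧ ∀ l < μ, digit p t l ∈ Aset p n i l := by
  have hi : i ∈ Bset p μ n t := hB ▸ Finset.mem_singleton_self i
  simp only [Bset, Finset.mem_filter, Finset.mem_range] at hi
  obtain ⟨hiμ, hbi⟩ := hi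
  have hno : ∀ l, l ≠ i → ¬(n % p ^ (l+1) < t % p ^ (l+1)) := by
    intro l hne hb
    rcases lt_or_ge l μ with h | h
    · have : l ∈ Bset p μ n t := by
        simp only [Bset, Finset.mem_filter, Finset.mem_range]; exact ⟨h, hb⟩
      rw [hB, Finset.mem_singleton] at this; exact hne this
    · have h1 : t % p ^ (l+1) = t :=
        Nat.mod_eq_of_lt (lt_of_le_of_lt ht (lt_of_lt_of_le hn (Nat.pow_le_pow_right (by omega) (by omega))))
      have h2 : n % p ^ (l+1) = n :=
        Nat.mod_eq_of_lt (lt_of_lt_of_le hn (Nat.pow_le_pow_right (by omega) (by omega)))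
      rw [h1, h2] at hb; omega
  have hlow : ∀ k < i, digit p t k ≤ digit p n k := by
    intro k hk
    by_contra h
    exact hno k (by omega) (mod_lt_of_digit_lt hp k (by omega))
  have hdi : digit p n i < digit p t i := by
    rcases Nat.lt_trichotomy (digit p t i) (digit p n i) with h | h | h
    · exact absurd hbi (not_lt.mpr (le_of_lt (mod_lt_of_digit_lt hp i h)))
    · exfalso
      have := (mod_lt_iff_of_digit_eq i h).mp hbi
      cases i with
      | zero => rw [pow_zero] at this; omega
      | succ k => exact hno k (by omega) this
    · exact h
  have hdi1 : digit p t (i+1) < digit p n (i+1) := by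
    rcases Nat.lt_trichotomy (digit p t (i+1)) (digit p n (i+1)) with h | h | h
    · exact h
    · exact absurd ((mod_lt_iff_of_digit_eq (i+1) h).mpr hbi) (hno (i+1) (by omega))
    · exact absurd (mod_lt_of_digit_lt hp (i+1) h) (hno (i+1) (by omega))
  have hiμ2 : i + 1 < μ := by
    by_contra h
    rw [digit_eq_zero_of_lt (lt_of_lt_of_le hn (Nat.pow_le_pow_right (by omega) (by omega)))] at hdi1
    omega
  refine ⟨hiμ2, fun l hl => ?_⟩
  rcases eq_or_ne l i with rfl | h1
  · rw [Aset_self, Finset.mem_Ico]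
    exact ⟨by omega, digit_lt hp t l⟩
  rcases eq_or_ne l (i+1) with rfl | h2
  · rw [Aset_succ, Finset.mem_range]; exact hdi1
  · rw [Aset_other p n i l h1 h2, Finset.mem_Iic]
    rcases lt_or_ge l i with h | h
    · exact hlow l h
    · by_contra hc
      exact hno l h1 (mod_lt_of_digit_lt hp l (by omega))

def Gset (p μ n i : ℕ) : Finset ℕ :=
  (range (p ^ μ)).filter fun t => ∀ l < μ, digit p t l ∈ Aset p n i l

lemma Aset_subset (hp : 2 ≤ p) (n i l : ℕ) : Aset p n i l ⊆ range p := by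
  unfold Aset
  split
  · intro x hx; rw [Finset.mem_Ico] at hx; exact Finset.mem_range.mpr hx.2
  split
  · exact Finset.range_subset_range.mpr (le_of_lt (digit_lt hp n (i+1)))
  · intro x hx
    rw [Finset.mem_Iic] at hx
    exact Finset.mem_range.mpr (lt_of_le_of_lt hx (digit_lt hp n l))

lemma Gset_card (hp : 2 ≤ p) {n μ i : ℕ} (hiμ : i + 1 < μ) :
    (Gset p μ n i).card = (∏ l ∈ Ico (i + 2) μ, (digit p n l + 1)) * digit p n (i + 1) *
      (p - digit p n i - 1) * ∏ l ∈ range i, (digit p n l + 1) := by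
  rw [Gset, card_digit_filter hp μ _ (Aset_subset hp n i)]
  rw [← Finset.prod_range_mul_prod_Ico _ (show i + 2 ≤ μ by omega),
    Finset.prod_range_succ, Finset.prod_range_succ]
  rw [Aset_self, Aset_succ, Nat.card_Ico, Finset.card_range]
  have e1 : ∏ l ∈ range i, (Aset p n i l).card = ∏ l ∈ range i, (digit p n l + 1) := by
    refine Finset.prod_congr rfl fun l hl => ?_
    rw [Finset.mem_range] at hl
    rw [Aset_other p n i l (by omega) (by omega), Nat.card_Iic]
  have e2 : ∏ l ∈ Ico (i+2) μ, (Aset p n i l).card = ∏ l ∈ Ico (i+2) μ, (digit p n l + 1) := by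
    refine Finset.prod_congr rfl fun l hl => ?_
    rw [Finset.mem_Ico] at hl
    rw [Aset_other p n i l (by omega) (by omega), Nat.card_Iic]
  rw [e1, e2]
  have : p - (digit p n i + 1) = p - digit p n i - 1 := by omega
  rw [this]; ring

lemma theta1_eq (hp : p.Prime) {n μ : ℕ} (hμ : 1 ≤ μ) (hn : n < p ^ μ) :
    theta p 1 n = ∑ i ∈ range (μ - 1),
      (∏ l ∈ Ico (i + 2) μ, (digit p n l + 1)) * digit p n (i + 1) *
        (p - digit p n i - 1) * ∏ l ∈ range i, (digit p n l + 1) := by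
  have hp2 : 2 ≤ p := hp.two_le
  have hset : ((Finset.range (n + 1)).filter fun t => padicValNat p (n.choose t) = 1)
      = (range (μ - 1)).biUnion (Gset p μ n) := by
    ext t
    simp only [Finset.mem_filter, Finset.mem_range, Finset.mem_biUnion]
    constructor
    · rintro ⟨ht, hv⟩
      have ht' : t ≤ n := by omega
      rw [kummer hp ht' hn] at hv
      obtain ⟨i, hi⟩ := Finset.card_eq_one.mp hv
      obtain ⟨hiμ, hc⟩ := fwd hp2 hn ht' hi
      exact ⟨i, by omega, Finset.mem_filter.mpr
        ⟨Finset.mem_range.mpr (lt_of_le_of_lt ht' hn), hc⟩⟩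
    · rintro ⟨i, hi, hti⟩
      rw [Gset, Finset.mem_filter, Finset.mem_range] at hti
      obtain ⟨htp, hc⟩ := hti
      obtain ⟨htn, hB⟩ := bwd hp2 hn (by omega) htp hc
      refine ⟨by omega, ?_⟩
      rw [kummer hp (le_of_lt htn) hn, hB, Finset.card_singleton]
  have hdisj : ∀ i ∈ range (μ - 1), ∀ j ∈ range (μ - 1), i ≠ j →
      Disjoint (Gset p μ n i) (Gset p μ n j) := by
    have key : ∀ i j : ℕ, i < j → j < μ - 1 → Disjoint (Gset p μ n i) (Gset p μ n j) := by
      intro i j hij hjμ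
      rw [Finset.disjoint_left]
      intro t h1 h2
      rw [Gset, Finset.mem_filter] at h1 h2
      have hj : digit p n j < digit p t j := by
        have := h2.2 j (by omega)
        rw [Aset_self, Finset.mem_Ico] at this; omega
      have := h1.2 j (by omega)
      rcases eq_or_ne j (i + 1) with rfl | hne
      · rw [Aset_succ, Finset.mem_range] at this; omega
      · rw [Aset_other p n i j (by omega) hne, Finset.mem_Iic] at this; omega
    intro i hi j hj hne
    rw [Finset.mem_range] at hi hj
    rcases lt_or_gt_of_ne hne with h | h
    · exact key i j h hj
    · exact (key j i h hi).symm
  rw [theta, hset, Finset.card_biUnion hdisj]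
  exact Finset.sum_congr rfl fun i hi =>
    Gset_card hp2 (by rw [Finset.mem_range] at hi; omega)

lemma theta0_eq (hp : p.Prime) {n μ : ℕ} (hn : n < p ^ μ) :
    theta p 0 n = ∏ l ∈ range μ, (digit p n l + 1) := by
  have hp2 : 2 ≤ p := hp.two_le
  have hset : ((Finset.range (n + 1)).filter fun t => padicValNat p (n.choose t) = 0)
      = (range (p ^ μ)).filter fun t => ∀ l < μ, digit p t l ∈ Iic (digit p n l) := by
    ext t
    simp only [Finset.mem_filter, Finset.mem_range, Finset.mem_Iic]
    constructor
    · rintro ⟨ht, hv⟩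
      have ht' : t ≤ n := by omega
      rw [kummer hp ht' hn, Finset.card_eq_zero] at hv
      refine ⟨lt_of_le_of_lt ht' hn, fun l hl => ?_⟩
      by_contra h
      have : l ∈ Bset p μ n t := by
        simp only [Bset, Finset.mem_filter, Finset.mem_range]
        exact ⟨hl, mod_lt_of_digit_lt hp2 l (by omega)⟩
      rw [hv] at this; exact absurd this (Finset.notMem_empty l)
    · rintro ⟨htp, hc⟩
      have hall : ∀ l, digit p t l ≤ digit p n l := by
        intro l
        rcases lt_or_ge l μ with h | h
        · exact hc l h
        · rw [digit_eq_zero_of_lt (lt_of_lt_of_le htp (Nat.pow_le_pow_right (by omega) h))]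
          exact Nat.zero_le _
      have htn : t ≤ n := le_of_digit_le hp2 hall
      refine ⟨by omega, ?_⟩
      rw [kummer hp htn hn, Finset.card_eq_zero]
      rw [Finset.eq_empty_iff_forall_notMem]
      intro l hl
      simp only [Bset, Finset.mem_filter, Finset.mem_range] at hl
      exact absurd hl.2 (not_lt.mpr (noborrow hp2 (fun k _ => hall k)))
  rw [theta, hset, card_digit_filter hp2 μ _ (fun l => fun x hx =>
    Finset.mem_range.mpr (lt_of_le_of_lt (Finset.mem_Iic.mp hx) (digit_lt hp2 n l)))]
  exact Finset.prod_congr rfl fun l _ => Nat.card_Iic _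

lemma wordCount_eq (hp : 2 ≤ p) {n μ : ℕ} (hn : n < p ^ μ) (hμ : 1 ≤ μ) {a c : ℕ}
    (hc : 1 ≤ c) :
    wordCount p [a, c] n =
      ((range (μ - 1)).filter fun i => digit p n i = a ∧ digit p n (i+1) = c).card := by
  rw [wordCount]
  have hset : {i : ℕ | ∀ k < ([a, c] : List ℕ).length, digit p n (i + k) = [a, c].getD k 0}
      = ↑((range (μ - 1)).filter fun i => digit p n i = a ∧ digit p n (i+1) = c) := by
    ext i
    simp only [List.length_cons, List.length_nil, Set.mem_setOf_eq, Finset.coe_filter,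
      Set.mem_setOf_eq, Finset.mem_range]
    constructor
    · intro h
      have h0 := h 0 (by omega)
      have h1 := h 1 (by omega)
      simp only [Nat.add_zero, List.getD] at h0 h1
      have ha : digit p n i = a := h0
      have hcc : digit p n (i+1) = c := h1
      have hiμ : i + 1 < μ := by
        by_contra hcon
        rw [digit_eq_zero_of_lt (lt_of_lt_of_le hn (Nat.pow_le_pow_right (by omega) (by omega)))] at hcc
        omega
      exact ⟨by omega, ha, hcc⟩
    · rintro ⟨hi, ha, hcc⟩
      intro k hk
      interval_cases k
      · simpa using ha
      · simpa using hcc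
  rw [hset, Set.ncard_coe_finset]

lemma part2 (hp : p.Prime) {n μ : ℕ} (hμ : 1 ≤ μ) (hn : n < p ^ μ) :
    (theta p 1 n : ℚ) / (theta p 0 n : ℚ) =
      ∑ cc ∈ Finset.Icc 1 (p - 1), ∑ a ∈ Finset.range (p - 1),
        ((cc : ℚ) / ((cc : ℚ) + 1)) * (((p : ℚ) - (a : ℚ) - 1) / ((a : ℚ) + 1)) *
          (wordCount p [a, cc] n : ℚ) := by
  have hp2 : 2 ≤ p := hp.two_le
  -- RHS rewrite
  have hRHS : ∑ cc ∈ Finset.Icc 1 (p - 1), ∑ a ∈ Finset.range (p - 1),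
        ((cc : ℚ) / ((cc : ℚ) + 1)) * (((p : ℚ) - (a : ℚ) - 1) / ((a : ℚ) + 1)) *
          (wordCount p [a, cc] n : ℚ)
      = ∑ i ∈ range (μ - 1),
          (if digit p n i ∈ range (p - 1) ∧ digit p n (i+1) ∈ Finset.Icc 1 (p - 1) then
            ((digit p n (i+1) : ℚ) / ((digit p n (i+1) : ℚ) + 1)) *
              (((p : ℚ) - (digit p n i : ℚ) - 1) / ((digit p n i : ℚ) + 1)) else 0) := by
    have step1 : ∀ cc ∈ Finset.Icc 1 (p-1), ∀ a ∈ range (p-1),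
        ((cc : ℚ) / ((cc : ℚ) + 1)) * (((p : ℚ) - (a : ℚ) - 1) / ((a : ℚ) + 1)) *
          (wordCount p [a, cc] n : ℚ)
        = ∑ i ∈ range (μ - 1), (if digit p n i = a ∧ digit p n (i+1) = cc then
            ((cc : ℚ) / ((cc : ℚ) + 1)) * (((p : ℚ) - (a : ℚ) - 1) / ((a : ℚ) + 1)) else 0) := by
      intro cc hcc a _
      rw [wordCount_eq hp2 hn hμ (Finset.mem_Icc.mp hcc).1, Finset.card_filter]
      push_cast
      rw [Finset.mul_sum]
      refine Finset.sum_congr rfl fun i _ => ?_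
      rw [mul_ite, mul_one, mul_zero]
    rw [Finset.sum_congr rfl (fun cc hcc => Finset.sum_congr rfl (step1 cc hcc))]
    rw [Finset.sum_congr rfl (fun cc _ => Finset.sum_comm), Finset.sum_comm]
    refine Finset.sum_congr rfl fun i _ => ?_
    have inner1 : ∀ cc, ∑ a ∈ range (p-1),
        (if digit p n i = a ∧ digit p n (i+1) = cc then
          ((cc : ℚ) / ((cc : ℚ) + 1)) * (((p : ℚ) - (a : ℚ) - 1) / ((a : ℚ) + 1)) else 0)
        = (if digit p n i ∈ range (p-1) then
            (if digit p n (i+1) = cc then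
              ((cc : ℚ) / ((cc : ℚ) + 1)) *
                (((p : ℚ) - (digit p n i : ℚ) - 1) / ((digit p n i : ℚ) + 1)) else 0) else 0) := by
      intro cc
      rw [← Finset.sum_ite_eq (range (p-1)) (digit p n i)
        (fun a => if digit p n (i+1) = cc then
          ((cc : ℚ) / ((cc : ℚ) + 1)) * (((p : ℚ) - (a : ℚ) - 1) / ((a : ℚ) + 1)) else 0)]
      refine Finset.sum_congr rfl fun a _ => ?_
      rw [ite_and]
    rw [Finset.sum_congr rfl (fun cc _ => inner1 cc)]
    by_cases hdi : digit p n i ∈ range (p-1)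
    · simp only [hdi, if_true, true_and]
      rw [Finset.sum_ite_eq (Finset.Icc 1 (p-1)) (digit p n (i+1))]
    · simp only [hdi, if_false, false_and]
      simp
  rw [hRHS, theta1_eq hp hμ hn, theta0_eq hp hn]
  push_cast
  rw [Finset.sum_div]
  refine Finset.sum_congr rfl fun i hi => ?_
  rw [Finset.mem_range] at hi
  have hdi : digit p n i < p := digit_lt hp2 n i
  have hdi1 : digit p n (i+1) < p := digit_lt hp2 n (i+1)
  have hsub : ((p - digit p n i - 1 : ℕ) : ℚ) = (p : ℚ) - (digit p n i : ℚ) - 1 := by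
    rw [Nat.cast_sub (by omega : 1 ≤ p - digit p n i), Nat.cast_sub (by omega : digit p n i ≤ p),
      Nat.cast_one]
  rw [hsub]
  have hsplit : ∏ l ∈ range μ, ((digit p n l : ℚ) + 1)
      = (∏ l ∈ range i, ((digit p n l : ℚ) + 1)) * ((digit p n i : ℚ) + 1) *
        ((digit p n (i+1) : ℚ) + 1) * ∏ l ∈ Ico (i+2) μ, ((digit p n l : ℚ) + 1) := by
    rw [← Finset.prod_range_mul_prod_Ico _ (show i + 2 ≤ μ by omega),
      Finset.prod_range_succ, Finset.prod_range_succ]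
  rw [hsplit]
  have hA : (∏ l ∈ range i, ((digit p n l : ℚ) + 1)) ≠ 0 :=
    Finset.prod_ne_zero_iff.mpr fun l _ => by positivity
  have hB : (∏ l ∈ Ico (i+2) μ, ((digit p n l : ℚ) + 1)) ≠ 0 :=
    Finset.prod_ne_zero_iff.mpr fun l _ => by positivity
  have hu : ((digit p n i : ℚ) + 1) ≠ 0 := by positivity
  have hv : ((digit p n (i+1) : ℚ) + 1) ≠ 0 := by positivity
  by_cases h1 : digit p n (i+1) = 0
  · rw [if_neg (by simp [h1, Finset.mem_Icc]), h1]
    push_cast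
    ring
  · by_cases h2 : digit p n i = p - 1
    · rw [if_neg (by simp [h2, Finset.mem_range])]
      have : (p : ℚ) - (digit p n i : ℚ) - 1 = 0 := by
        rw [h2, Nat.cast_sub (by omega : 1 ≤ p), Nat.cast_one]; ring
      rw [this]
      ring
    · rw [if_pos ⟨Finset.mem_range.mpr (by omega), Finset.mem_Icc.mpr ⟨by omega, by omega⟩⟩]
      field_simp

/-- Carlitz' explicit formula for `θ_p(1,n)` and the resulting formula
`θ_p(1,n)/θ_p(0,n) = Σ_{c,a} (c/(c+1))·((p−a−1)/(a+1))·|n|_{ca}`.  Here `[a, c]` is the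
two-letter word `ca` (rightmost letter `a` first). -/
theorem stmt17 (p : ℕ) (hp : p.Prime) (n μ : ℕ) (hμ : 1 ≤ μ) (hn : n < p ^ μ) :
    theta p 1 n =
      (∑ i ∈ Finset.range (μ - 1),
        (∏ l ∈ Finset.Ico (i + 2) μ, (digit p n l + 1)) * digit p n (i + 1) *
          (p - digit p n i - 1) * ∏ l ∈ Finset.range i, (digit p n l + 1)) ∧
    (theta p 1 n : ℚ) / (theta p 0 n : ℚ) =
      ∑ cc ∈ Finset.Icc 1 (p - 1), ∑ a ∈ Finset.range (p - 1),
        ((cc : ℚ) / ((cc : ℚ) + 1)) * (((p : ℚ) - (a : ℚ) - 1) / ((a : ℚ) + 1)) *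
          (wordCount p [a, cc] n : ℚ) := by
  exact ⟨theta1_eq hp hμ hn, part2 hp hμ hn⟩
end
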